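/- arXiv:2603.25644 — 3 statements merged into one kernel-verified Lean document; each statement's English description precedes it below -/
import Mathlib

section
/- Let φ be a norm on ℝ^{n+1}, let A ⊆ ℝ^{n+1} be nonempty, let a ∈ closure(A), let η ∈ ℝ^{n+1} with φ°(η) = 1, and let t > 0 be such that δ_A^φ(a + tη) = t. Then δ_A^φ(a + sη) = s for every s with 0 ≤ s ≤ t. -/
open MeasureTheory Filter
open scoped RealInnerProductSpace ENNReal Pointwise Topology NNReal

noncomputable section

/-- `ℝ^{n+1}` with the Euclidean inner product. -/
abbrev Eu (n : ℕ) := EuclideanSpace ℝ (Fin (n + 1))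

/-- `φ` is a norm on `ℝ^{n+1}`: positive away from `0`, absolutely homogeneous,
and subadditive. -/
def IsNorm {n : ℕ} (φ : Eu n → ℝ) : Prop :=
  (∀ v : Eu n, v ≠ 0 → 0 < φ v) ∧
  (∀ (c : ℝ) (v : Eu n), φ (c • v) = |c| * φ v) ∧
  (∀ v w : Eu n, φ (v + w) ≤ φ v + φ w)

/-- `φ` is strictly convex: equality in the triangle inequality forces linear dependence. -/
def StrictlyConvexNorm {n : ℕ} (φ : Eu n → ℝ) : Prop :=
  ∀ v w : Eu n, φ (v + w) = φ v + φ w → φ v • w = φ w • v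

/-- The dual (polar) norm `φ°(u) = sup {⟨u,v⟩ : φ(v) ≤ 1}`. -/
def dualN {n : ℕ} (φ : Eu n → ℝ) (u : Eu n) : ℝ :=
  sSup {r : ℝ | ∃ v : Eu n, φ v ≤ 1 ∧ r = ⟪u, v⟫}

/-- The `φ`-distance `δ_A^φ(x) = inf {φ°(x − a) : a ∈ A}`. -/
def adist {n : ℕ} (φ : Eu n → ℝ) (A : Set (Eu n)) (x : Eu n) : ℝ :=
  sInf ((fun a => dualN φ (x - a)) '' A)

/-- The `φ`-unit normal bundle `N^φ(A)`. -/
def normalBundle {n : ℕ} (φ : Eu n → ℝ) (A : Set (Eu n)) : Set (Eu n × Eu n) :=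
  {p | p.1 ∈ closure A ∧ dualN φ p.2 = 1 ∧ ∃ s : ℝ, 0 < s ∧ adist φ A (p.1 + s • p.2) = s}

/-- The `φ`-reach function `r_A^φ(a,η) = sup {s > 0 : δ_A^φ(a + sη) = s}`, valued in `[0,∞]`. -/
def reach {n : ℕ} (φ : Eu n → ℝ) (A : Set (Eu n)) (a η : Eu n) : ℝ≥0∞ :=
  sSup {s : ℝ≥0∞ | ∃ t : ℝ, 0 < t ∧ adist φ A (a + t • η) = t ∧ s = ENNReal.ofReal t}

/-- The `φ`-cut locus of `A`. -/
def cutLocus {n : ℕ} (φ : Eu n → ℝ) (A : Set (Eu n)) : Set (Eu n) :=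
  {x | ∃ a η : Eu n, (a, η) ∈ normalBundle φ A ∧ reach φ A a η < ⊤ ∧
      x = a + (reach φ A a η).toReal • η}

/-- The domain `Γ^φ(A)` of the `φ`-distance flow. -/
def Gamma {n : ℕ} (φ : Eu n → ℝ) (A : Set (Eu n)) : Set (Eu n × Eu n × ℝ) :=
  {q | (q.1, q.2.1) ∈ normalBundle φ A ∧ 0 < q.2.2 ∧
      ENNReal.ofReal q.2.2 < reach φ A q.1 q.2.1}

namespace Aux0

variable {n : ℕ} {φ : Eu n → ℝ}

lemma phi_zero (hφ : IsNorm φ) : φ 0 = 0 := by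
  have := hφ.2.1 0 0
  simpa using this

lemma phi_nonneg (hφ : IsNorm φ) (v : Eu n) : 0 ≤ φ v := by
  rcases eq_or_ne v 0 with rfl | h
  · simp [phi_zero hφ]
  · exact (hφ.1 v h).le

/-- upper bound -/
lemma phi_upper (hφ : IsNorm φ) : ∃ C : ℝ, 0 < C ∧ ∀ v : Eu n, φ v ≤ C * ‖v‖ := by
  classical
  set b := PiLp.basisFun 2 ℝ (Fin (n + 1)) with hb
  set C : ℝ := (∑ i : Fin (n + 1), φ (b i)) + 1 with hC
  refine ⟨C, ?_, ?_⟩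
  · have : 0 ≤ ∑ i : Fin (n + 1), φ (b i) :=
      Finset.sum_nonneg fun i _ => phi_nonneg hφ _
    linarith
  · intro v
    have hrepr : ∑ i : Fin (n + 1), b.repr v i • b i = v := b.sum_repr v
    have hsum : φ v ≤ ∑ i : Fin (n + 1), φ (b.repr v i • b i) := by
      conv_lhs => rw [← hrepr]
      exact Finset.le_sum_of_subadditive φ (phi_zero hφ).le hφ.2.2 _ _
    have hcoord : ∀ i : Fin (n + 1), |v i| ≤ ‖v‖ := by
      intro i
      have h1 : ⟪(EuclideanSpace.single i (1:ℝ) : Eu n), v⟫ = v i := by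
        simp [EuclideanSpace.inner_single_left]
      have h2 := abs_real_inner_le_norm (EuclideanSpace.single i (1:ℝ) : Eu n) v
      rw [h1, EuclideanSpace.norm_single] at h2
      simpa using h2
    have hstep : ∀ i : Fin (n + 1), φ (b.repr v i • b i) ≤ φ (b i) * ‖v‖ := by
      intro i
      rw [hφ.2.1, PiLp.basisFun_repr]
      calc |v i| * φ (b i) = φ (b i) * |v i| := mul_comm _ _
        _ ≤ φ (b i) * ‖v‖ := by
            exact mul_le_mul_of_nonneg_left (hcoord i) (phi_nonneg hφ _)
    calc φ v ≤ ∑ i : Fin (n + 1), φ (b.repr v i • b i) := hsum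
      _ ≤ ∑ i : Fin (n + 1), φ (b i) * ‖v‖ := Finset.sum_le_sum fun i _ => hstep i
      _ = (∑ i : Fin (n + 1), φ (b i)) * ‖v‖ := by rw [← Finset.sum_mul]
      _ ≤ C * ‖v‖ := by
          have : 0 ≤ ‖v‖ := norm_nonneg v
          nlinarith

lemma phi_continuous (hφ : IsNorm φ) : Continuous φ := by
  obtain ⟨C, hC0, hC⟩ := phi_upper hφ
  have hlip : LipschitzWith (Real.toNNReal C) φ := by
    apply LipschitzWith.of_dist_le_mul
    intro v w
    have h1 : φ v - φ w ≤ φ (v - w) := by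
      have := hφ.2.2 w (v - w)
      simp at this
      linarith
    have hsym : φ (w - v) = φ (v - w) := by
      have := hφ.2.1 (-1) (v - w)
      simpa [neg_sub] using this
    have h2 : φ w - φ v ≤ φ (v - w) := by
      have := hφ.2.2 v (w - v)
      rw [hsym] at this
      simp at this
      linarith
    have : |φ v - φ w| ≤ φ (v - w) := abs_sub_le_iff.2 ⟨h1, h2⟩
    calc dist (φ v) (φ w) = |φ v - φ w| := Real.dist_eq _ _
      _ ≤ φ (v - w) := this
      _ ≤ C * ‖v - w‖ := hC _
      _ = (Real.toNNReal C) * dist v w := by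
          rw [Real.coe_toNNReal C hC0.le, dist_eq_norm]
  exact hlip.continuous

lemma phi_lower (hφ : IsNorm φ) : ∃ c : ℝ, 0 < c ∧ ∀ v : Eu n, c * ‖v‖ ≤ φ v := by
  have hsne : (Metric.sphere (0 : Eu n) 1).Nonempty :=
    NormedSpace.sphere_nonempty.2 zero_le_one
  obtain ⟨v₀, hv₀s, hv₀min⟩ :=
    (isCompact_sphere (0 : Eu n) 1).exists_isMinOn hsne (phi_continuous hφ).continuousOn
  have hv₀norm : ‖v₀‖ = 1 := by simpa using mem_sphere_zero_iff_norm.1 hv₀s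
  have hv₀ne : v₀ ≠ 0 := by
    intro h; rw [h] at hv₀norm; simp at hv₀norm
  refine ⟨φ v₀, hφ.1 v₀ hv₀ne, ?_⟩
  intro v
  rcases eq_or_ne v 0 with rfl | hv
  · simp [phi_zero hφ]
  · have hnv : 0 < ‖v‖ := norm_pos_iff.2 hv
    have hmem : (‖v‖⁻¹ • v) ∈ Metric.sphere (0 : Eu n) 1 := by
      simp [norm_smul, abs_of_pos (inv_pos.2 hnv), inv_mul_cancel₀ hnv.ne']
    have hmin := hv₀min hmem
    have hmin' : φ v₀ ≤ φ (‖v‖⁻¹ • v) := hmin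
    have h2 : φ (‖v‖⁻¹ • v) = ‖v‖⁻¹ * φ v := by
      rw [hφ.2.1]; congr 1; exact abs_of_pos (inv_pos.2 hnv)
    rw [h2] at hmin'
    calc φ v₀ * ‖v‖ ≤ (‖v‖⁻¹ * φ v) * ‖v‖ := by
          exact mul_le_mul_of_nonneg_right hmin' hnv.le
      _ = φ v := by field_simp

/-- membership of 0 -/
lemma zero_mem_dualSet (hφ : IsNorm φ) (u : Eu n) :
    (0 : ℝ) ∈ {r : ℝ | ∃ v : Eu n, φ v ≤ 1 ∧ r = ⟪u, v⟫} :=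
  ⟨0, by simp [phi_zero hφ], by simp⟩

lemma dualSet_bddAbove (hφ : IsNorm φ) (u : Eu n) :
    BddAbove {r : ℝ | ∃ v : Eu n, φ v ≤ 1 ∧ r = ⟪u, v⟫} := by
  obtain ⟨c, hc0, hc⟩ := phi_lower hφ
  refine ⟨‖u‖ * c⁻¹, ?_⟩
  rintro r ⟨v, hv, rfl⟩
  have hnv : ‖v‖ ≤ c⁻¹ := by
    rw [← one_div, le_div_iff₀ hc0]
    nlinarith [hc v]
  calc ⟪u, v⟫ ≤ ‖u‖ * ‖v‖ := real_inner_le_norm u v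
    _ ≤ ‖u‖ * c⁻¹ := mul_le_mul_of_nonneg_left hnv (norm_nonneg u)

lemma dualN_nonneg (hφ : IsNorm φ) (u : Eu n) : 0 ≤ dualN φ u :=
  le_csSup (dualSet_bddAbove hφ u) (zero_mem_dualSet hφ u)

lemma dualN_le_norm (hφ : IsNorm φ) : ∃ K : ℝ, 0 < K ∧ ∀ u : Eu n, dualN φ u ≤ K * ‖u‖ := by
  obtain ⟨c, hc0, hc⟩ := phi_lower hφ
  refine ⟨c⁻¹, by positivity, fun u => ?_⟩
  apply Real.sSup_le
  · rintro r ⟨v, hv, rfl⟩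
    have hnv : c * ‖v‖ ≤ 1 := le_trans (hc v) hv
    have hnv' : ‖v‖ ≤ c⁻¹ := by
      rw [← one_div, le_div_iff₀ hc0]
      nlinarith
    calc ⟪u, v⟫ ≤ ‖u‖ * ‖v‖ := real_inner_le_norm u v
      _ ≤ ‖u‖ * c⁻¹ := mul_le_mul_of_nonneg_left hnv' (norm_nonneg u)
      _ = c⁻¹ * ‖u‖ := mul_comm _ _
  · positivity

lemma dualN_add_le (hφ : IsNorm φ) (u w : Eu n) :
    dualN φ (u + w) ≤ dualN φ u + dualN φ w := by
  apply Real.sSup_le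
  · rintro r ⟨v, hv, rfl⟩
    rw [inner_add_left]
    have h1 : ⟪u, v⟫ ≤ dualN φ u := le_csSup (dualSet_bddAbove hφ u) ⟨v, hv, rfl⟩
    have h2 : ⟪w, v⟫ ≤ dualN φ w := le_csSup (dualSet_bddAbove hφ w) ⟨v, hv, rfl⟩
    linarith
  · have := dualN_nonneg hφ u; have := dualN_nonneg hφ w; linarith

lemma dualN_smul_le (hφ : IsNorm φ) {s : ℝ} (hs : 0 ≤ s) (u : Eu n) :
    dualN φ (s • u) ≤ s * dualN φ u := by
  apply Real.sSup_le
  · rintro r ⟨v, hv, rfl⟩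
    rw [inner_smul_left]
    simp only [RCLike.star_def, starRingEnd_apply, star_trivial]
    have h1 : ⟪u, v⟫ ≤ dualN φ u := le_csSup (dualSet_bddAbove hφ u) ⟨v, hv, rfl⟩
    exact mul_le_mul_of_nonneg_left h1 hs
  · exact mul_nonneg hs (dualN_nonneg hφ u)

lemma dualN_smul (hφ : IsNorm φ) {s : ℝ} (hs : 0 ≤ s) (u : Eu n) :
    dualN φ (s • u) = s * dualN φ u := by
  rcases eq_or_lt_of_le hs with rfl | hs'
  · have h0 : dualN φ (0 : Eu n) ≤ 0 := by
      apply Real.sSup_le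
      · rintro r ⟨v, hv, rfl⟩; simp
      · rfl
    have := dualN_nonneg hφ (0 : Eu n)
    simp only [zero_smul, zero_mul]
    linarith
  · apply le_antisymm (dualN_smul_le hφ hs u)
    have := dualN_smul_le hφ (le_of_lt (inv_pos.2 hs')) (s • u)
    rw [inv_smul_smul₀ hs'.ne'] at this
    calc s * dualN φ u ≤ s * (s⁻¹ * dualN φ (s • u)) :=
          mul_le_mul_of_nonneg_left this hs'.le
      _ = dualN φ (s • u) := by field_simp

lemma adist_le (hφ : IsNorm φ) {A : Set (Eu n)} {a' : Eu n} (ha' : a' ∈ A) (x : Eu n) :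
    adist φ A x ≤ dualN φ (x - a') :=
  csInf_le ⟨0, by rintro r ⟨b, _, rfl⟩; exact dualN_nonneg hφ _⟩ ⟨a', ha', rfl⟩

lemma adist_nonneg (hφ : IsNorm φ) {A : Set (Eu n)} (hA : A.Nonempty) (x : Eu n) :
    0 ≤ adist φ A x := by
  apply le_csInf (hA.image _)
  rintro r ⟨b, _, rfl⟩
  exact dualN_nonneg hφ _

lemma adist_lipschitz (hφ : IsNorm φ) {A : Set (Eu n)} (hA : A.Nonempty) (x y : Eu n) :
    adist φ A x ≤ adist φ A y + dualN φ (x - y) := by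
  rw [← sub_le_iff_le_add]
  apply le_csInf (hA.image _)
  rintro r ⟨b, hb, rfl⟩
  rw [sub_le_iff_le_add]
  calc adist φ A x ≤ dualN φ (x - b) := adist_le hφ hb x
    _ ≤ dualN φ (x - y) + dualN φ (y - b) := by
        have := dualN_add_le hφ (x - y) (y - b)
        simpa using this
    _ = dualN φ (y - b) + dualN φ (x - y) := add_comm _ _

end Aux0

open Aux0 in
/-- if `δ_A^φ(a + tη) = t` for some `t > 0`, `a ∈ closure A` and `φ°(η) = 1`,
then `δ_A^φ(a + sη) = s` for all `0 ≤ s ≤ t`. -/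
theorem dist_eq_on_segment {n : ℕ} (φ : Eu n → ℝ) (hφ : IsNorm φ)
    (A : Set (Eu n)) (hA : A.Nonempty)
    (a : Eu n) (ha : a ∈ closure A)
    (η : Eu n) (hη : dualN φ η = 1)
    (t : ℝ) (ht : 0 < t) (hdist : adist φ A (a + t • η) = t) :
    ∀ s : ℝ, 0 ≤ s → s ≤ t → adist φ A (a + s • η) = s := by
  intro s hs0 hst
  obtain ⟨K, hK0, hK⟩ := dualN_le_norm hφ
  have hub : adist φ A (a + s • η) ≤ s := by
    have key : ∀ ε : ℝ, 0 < ε → adist φ A (a + s • η) ≤ s + ε := by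
      intro ε hε
      obtain ⟨a', ha', hd⟩ := Metric.mem_closure_iff.1 ha (ε / K) (by positivity)
      calc adist φ A (a + s • η) ≤ dualN φ (a + s • η - a') := adist_le hφ ha' _
        _ ≤ dualN φ (s • η) + dualN φ (a - a') := by
            have := dualN_add_le hφ (s • η) (a - a')
            have heq : a + s • η - a' = s • η + (a - a') := by abel
            rw [heq]; exact this
        _ ≤ s * dualN φ η + K * ‖a - a'‖ := by
            have h1 := dualN_smul hφ hs0 η
            have h2 := hK (a - a')
            linarith
        _ ≤ s + ε := by
            rw [hη, mul_one]
            have : ‖a - a'‖ < ε / K := by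
              rw [← dist_eq_norm]; exact hd
            have : K * ‖a - a'‖ ≤ ε := by
              rw [mul_comm, ← le_div_iff₀ hK0]
              exact this.le
            linarith
    by_contra h
    push_neg at h
    have := key ((adist φ A (a + s • η) - s) / 2) (by linarith)
    linarith
  have hlb : s ≤ adist φ A (a + s • η) := by
    have hlip := adist_lipschitz hφ hA (a + t • η) (a + s • η)
    have heq : a + t • η - (a + s • η) = (t - s) • η := by
      rw [sub_smul]; abel
    rw [heq, dualN_smul hφ (by linarith) η, hη, mul_one, hdist] at hlip
    linarith
  linarith
end
end

section
/- Let R > 0, let {φ_h}_{h∈ℕ} be a sequence of norms on ℝ^{n+1} converging pointwise to a norm φ, let {Ω_h}_{h∈ℕ} be open subsets of the Euclidean ball B_R with Ω_h ≠ ℝ^{n+1}, and suppose that the functions δ^{φ_h}_{Ω_h} converge uniformly on every compact subset of ℝ^{n+1} to a function f : ℝ^{n+1} → ℝ. Then, setting P = {x : f(x) > 0}, one has f(x) = inf{φ°(x − a) : a ∈ ℝ^{n+1} \ P} for every x ∈ ℝ^{n+1}, i.e. f = δ^φ_P. -/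
open MeasureTheory Filter
open scoped RealInnerProductSpace ENNReal Pointwise Topology NNReal

noncomputable section

section AuxLemmas
variable {n : ℕ} {φ : Eu n → ℝ}

lemma IsNorm.zero (hφ : IsNorm φ) : φ 0 = 0 := by
  have := hφ.2.1 0 0
  simpa using this

lemma IsNorm.nonneg (hφ : IsNorm φ) (v : Eu n) : 0 ≤ φ v := by
  rcases eq_or_ne v 0 with rfl | h
  · simp [hφ.zero]
  · exact (hφ.1 v h).le

lemma IsNorm.neg (hφ : IsNorm φ) (v : Eu n) : φ (-v) = φ v := by
  have := hφ.2.1 (-1) v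
  simpa using this

lemma IsNorm.sub_le (hφ : IsNorm φ) (v w : Eu n) : φ v - φ w ≤ φ (v - w) := by
  have := hφ.2.2 w (v - w)
  simp only [add_sub_cancel] at this
  linarith

lemma IsNorm.abs_sub_le (hφ : IsNorm φ) (v w : Eu n) : |φ v - φ w| ≤ φ (v - w) := by
  rw [abs_sub_le_iff]
  refine ⟨hφ.sub_le v w, ?_⟩
  have := hφ.sub_le w v
  have h2 : φ (w - v) = φ (v - w) := by
    rw [show w - v = -(v - w) by abel, hφ.neg]
  linarith

lemma abs_apply_le_norm (v : Eu n) (i : Fin (n+1)) : |v i| ≤ ‖v‖ := by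
  rw [EuclideanSpace.norm_eq]
  rw [show |v i| = Real.sqrt (v i ^ 2) by rw [Real.sqrt_sq_eq_abs]]
  apply Real.sqrt_le_sqrt
  have : (v i) ^ 2 = ‖v i‖ ^ 2 := by simp [sq_abs, Real.norm_eq_abs]
  rw [this]
  exact Finset.single_le_sum (f := fun j => ‖v j‖ ^ 2) (fun j _ => by positivity) (Finset.mem_univ i)

lemma IsNorm.sum_le (hφ : IsNorm φ) {ι : Type*} (s : Finset ι) (g : ι → Eu n) :
    φ (∑ i ∈ s, g i) ≤ ∑ i ∈ s, φ (g i) := by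
  classical
  induction s using Finset.cons_induction with
  | empty => simp [hφ.zero]
  | cons a s ha ih =>
    rw [Finset.sum_cons, Finset.sum_cons]
    exact (hφ.2.2 _ _).trans (by linarith)

/-- upper bound constant -/
def normUB {n : ℕ} (φ : Eu n → ℝ) : ℝ := ∑ i : Fin (n+1), φ (EuclideanSpace.single i 1)

lemma IsNorm.le_ub (hφ : IsNorm φ) (v : Eu n) : φ v ≤ normUB φ * ‖v‖ := by
  have hv : v = ∑ i : Fin (n+1), (v i) • EuclideanSpace.single i (1:ℝ) := by
    ext j
    rw [show (∑ i : Fin (n + 1), v i • EuclideanSpace.single i (1:ℝ)) j = ∑ i : Fin (n+1), (v i • EuclideanSpace.single i (1:ℝ)) j by rw [WithLp.ofLp_sum, Finset.sum_apply]]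
    simp [EuclideanSpace.single_apply]
  calc φ v = φ (∑ i : Fin (n+1), (v i) • EuclideanSpace.single i (1:ℝ)) := by rw [← hv]
    _ ≤ ∑ i : Fin (n+1), φ ((v i) • EuclideanSpace.single i (1:ℝ)) := hφ.sum_le _ _
    _ = ∑ i : Fin (n+1), |v i| * φ (EuclideanSpace.single i (1:ℝ)) := by
        simp [hφ.2.1]
    _ ≤ ∑ i : Fin (n+1), ‖v‖ * φ (EuclideanSpace.single i (1:ℝ)) := by
        apply Finset.sum_le_sum
        intro i _
        exact mul_le_mul_of_nonneg_right (abs_apply_le_norm v i) (hφ.nonneg _)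
    _ = normUB φ * ‖v‖ := by
        rw [normUB, Finset.sum_mul]
        exact Finset.sum_congr rfl fun i _ => mul_comm _ _
lemma normUB_nonneg (hφ : IsNorm φ) : 0 ≤ normUB φ :=
  Finset.sum_nonneg fun i _ => hφ.nonneg _

lemma IsNorm.continuous (hφ : IsNorm φ) : Continuous φ := by
  rw [Metric.continuous_iff]
  intro v ε hε
  rcases lt_or_ge 0 (normUB φ) with hK | hK
  · exact ⟨ε / normUB φ, by positivity, fun w hw => by
      rw [Real.dist_eq]
      calc |φ w - φ v| ≤ φ (w - v) := hφ.abs_sub_le w v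
        _ ≤ normUB φ * ‖w - v‖ := hφ.le_ub _
        _ < normUB φ * (ε / normUB φ) := by
            apply mul_lt_mul_of_pos_left _ hK
            rwa [dist_eq_norm] at hw
        _ = ε := by field_simp⟩
  · exact ⟨1, one_pos, fun w hw => by
      rw [Real.dist_eq]
      have h1 : φ (w - v) ≤ 0 := (hφ.le_ub _).trans (mul_nonpos_of_nonpos_of_nonneg hK (norm_nonneg _))
      calc |φ w - φ v| ≤ φ (w - v) := hφ.abs_sub_le w v
        _ ≤ 0 := h1
        _ < ε := hε⟩

lemma IsNorm.exists_lower (hφ : IsNorm φ) : ∃ c > 0, ∀ v : Eu n, c * ‖v‖ ≤ φ v := by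
  have hsc : IsCompact (Metric.sphere (0 : Eu n) 1) := isCompact_sphere 0 1
  have hsn : (Metric.sphere (0 : Eu n) 1).Nonempty :=
    NormedSpace.sphere_nonempty.mpr zero_le_one
  obtain ⟨v₀, hv₀, hmin'⟩ := hsc.exists_isMinOn hsn hφ.continuous.continuousOn
  have hv₀ne : v₀ ≠ 0 := by
    intro h
    rw [mem_sphere_iff_norm, h] at hv₀
    simp at hv₀
  refine ⟨φ v₀, hφ.1 v₀ hv₀ne, fun v => ?_⟩
  rcases eq_or_ne v 0 with rfl | hv
  · simp [hφ.zero]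
  · have hnv : (0:ℝ) < ‖v‖ := norm_pos_iff.mpr hv
    have hmem : ‖v‖⁻¹ • v ∈ Metric.sphere (0 : Eu n) 1 := by
      simp [norm_smul, abs_of_pos (inv_pos.mpr hnv), inv_mul_cancel₀ hnv.ne']
    have hmin := isMinOn_iff.mp hmin'
    have := hmin _ hmem
    have h2 : φ (‖v‖⁻¹ • v) = ‖v‖⁻¹ * φ v := by
      rw [hφ.2.1, abs_of_pos (inv_pos.mpr hnv)]
    rw [h2] at this
    calc φ v₀ * ‖v‖ ≤ (‖v‖⁻¹ * φ v) * ‖v‖ := by nlinarith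
      _ = φ v := by field_simp

lemma dualSet_nonempty (φ : Eu n → ℝ) (hφ : IsNorm φ) (u : Eu n) :
    {r : ℝ | ∃ v : Eu n, φ v ≤ 1 ∧ r = ⟪u, v⟫}.Nonempty :=
  ⟨0, 0, by simp [hφ.zero], by simp⟩

lemma dualSet_bddAbove (hφ : IsNorm φ) {c : ℝ} (hc : 0 < c) (hlow : ∀ v, c * ‖v‖ ≤ φ v)
    (u : Eu n) : BddAbove {r : ℝ | ∃ v : Eu n, φ v ≤ 1 ∧ r = ⟪u, v⟫} := by
  refine ⟨‖u‖ / c, fun r hr => ?_⟩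
  obtain ⟨v, hv, rfl⟩ := hr
  have h1 : ‖v‖ ≤ 1 / c := by
    rw [le_div_iff₀ hc]
    calc ‖v‖ * c = c * ‖v‖ := mul_comm _ _
      _ ≤ φ v := hlow v
      _ ≤ 1 := hv
  calc ⟪u, v⟫ ≤ ‖u‖ * ‖v‖ := real_inner_le_norm u v
    _ ≤ ‖u‖ * (1 / c) := mul_le_mul_of_nonneg_left h1 (norm_nonneg u)
    _ = ‖u‖ / c := by ring

lemma dualN_nonneg (hφ : IsNorm φ) (u : Eu n) : 0 ≤ dualN φ u := by
  obtain ⟨c, hc, hlow⟩ := hφ.exists_lower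
  exact le_csSup (dualSet_bddAbove hφ hc hlow u) ⟨0, by simp [hφ.zero], by simp⟩

lemma dualN_le_div (hφ : IsNorm φ) {c : ℝ} (hc : 0 < c) (hlow : ∀ v, c * ‖v‖ ≤ φ v)
    (u : Eu n) : dualN φ u ≤ ‖u‖ / c := by
  apply csSup_le (dualSet_nonempty φ hφ u)
  rintro r ⟨v, hv, rfl⟩
  have h1 : ‖v‖ ≤ 1 / c := by
    rw [le_div_iff₀ hc]
    calc ‖v‖ * c = c * ‖v‖ := mul_comm _ _
      _ ≤ φ v := hlow v
      _ ≤ 1 := hv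
  calc ⟪u, v⟫ ≤ ‖u‖ * ‖v‖ := real_inner_le_norm u v
    _ ≤ ‖u‖ * (1 / c) := mul_le_mul_of_nonneg_left h1 (norm_nonneg u)
    _ = ‖u‖ / c := by ring

lemma le_dualN_of_mem (hφ : IsNorm φ) (u v : Eu n) (hv : φ v ≤ 1) : ⟪u, v⟫ ≤ dualN φ u := by
  obtain ⟨c, hc, hlow⟩ := hφ.exists_lower
  exact le_csSup (dualSet_bddAbove hφ hc hlow u) ⟨v, hv, rfl⟩

lemma dualN_zero (hφ : IsNorm φ) : dualN φ (0 : Eu n) = 0 := by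
  apply le_antisymm
  · apply csSup_le (dualSet_nonempty φ hφ 0)
    rintro r ⟨v, hv, rfl⟩
    simp
  · exact dualN_nonneg hφ 0

lemma ub_dualN (hφ : IsNorm φ) {K : ℝ} (hK : 0 < K) (hub : ∀ v, φ v ≤ K * ‖v‖)
    (u : Eu n) : ‖u‖ / K ≤ dualN φ u := by
  rcases eq_or_ne u 0 with rfl | hu
  · simp [dualN_zero hφ]
  · have hnu : (0:ℝ) < ‖u‖ := norm_pos_iff.mpr hu
    have hv : φ ((K * ‖u‖)⁻¹ • u) ≤ 1 := by
      rw [hφ.2.1, abs_of_pos (by positivity)]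
      calc (K * ‖u‖)⁻¹ * φ u ≤ (K * ‖u‖)⁻¹ * (K * ‖u‖) :=
            mul_le_mul_of_nonneg_left (hub u) (by positivity)
        _ = 1 := by field_simp
    have := le_dualN_of_mem hφ u _ hv
    rwa [real_inner_smul_right, real_inner_self_eq_norm_sq, show (K * ‖u‖)⁻¹ * (‖u‖^2) = ‖u‖/K by field_simp] at this

lemma dualN_add_le (hφ : IsNorm φ) (u w : Eu n) :
    dualN φ (u + w) ≤ dualN φ u + dualN φ w := by
  apply csSup_le (dualSet_nonempty φ hφ _)
  rintro r ⟨v, hv, rfl⟩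
  rw [inner_add_left]
  exact add_le_add (le_dualN_of_mem hφ u v hv) (le_dualN_of_mem hφ w v hv)

lemma dualN_neg (hφ : IsNorm φ) (u : Eu n) : dualN φ (-u) = dualN φ u := by
  have key : ∀ w : Eu n, {r : ℝ | ∃ v : Eu n, φ v ≤ 1 ∧ r = ⟪-w, v⟫} =
      {r : ℝ | ∃ v : Eu n, φ v ≤ 1 ∧ r = ⟪w, v⟫} := by
    intro w
    ext r
    constructor
    · rintro ⟨v, hv, rfl⟩
      exact ⟨-v, by rwa [hφ.neg], by simp⟩
    · rintro ⟨v, hv, rfl⟩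
      exact ⟨-v, by rwa [hφ.neg], by simp⟩
  rw [dualN, key]
  rfl

lemma dualN_sub_le (hφ : IsNorm φ) (u w : Eu n) :
    |dualN φ u - dualN φ w| ≤ dualN φ (u - w) := by
  rw [abs_sub_le_iff]
  constructor
  · have := dualN_add_le hφ w (u - w)
    simp only [add_sub_cancel] at this
    linarith
  · have := dualN_add_le hφ u (w - u)
    simp only [add_sub_cancel] at this
    have h2 : dualN φ (w - u) = dualN φ (u - w) := by
      rw [show w - u = -(u - w) by abel, dualN_neg hφ]
    linarith

/-- key comparison lemma for dual norms -/
lemma dualN_cmp {A B : Eu n → ℝ} (hA : IsNorm A) (hB : IsNorm B) {t : ℝ} (ht : 0 < t)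
    (hle : ∀ v, t * A v ≤ B v) (u : Eu n) : t * dualN B u ≤ dualN A u := by
  obtain ⟨c, hc, hlow⟩ := hA.exists_lower
  have h : dualN B u ≤ dualN A u / t := by
    apply csSup_le (dualSet_nonempty B hB u)
    rintro r ⟨v, hv, rfl⟩
    have hAv : A (t • v) ≤ 1 := by
      rw [hA.2.1, abs_of_pos ht]
      exact (hle v).trans hv
    have := le_dualN_of_mem hA u _ hAv
    rw [real_inner_smul_right] at this
    rw [le_div_iff₀ ht]
    linarith [this]
  calc t * dualN B u ≤ t * (dualN A u / t) := mul_le_mul_of_nonneg_left h ht.le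
    _ = dualN A u := by field_simp

lemma adist_bddBelow (hφ : IsNorm φ) (A : Set (Eu n)) (x : Eu n) :
    BddBelow ((fun a => dualN φ (x - a)) '' A) :=
  ⟨0, by rintro r ⟨a, _, rfl⟩; exact dualN_nonneg hφ _⟩

lemma adist_nonneg (hφ : IsNorm φ) {A : Set (Eu n)} (hA : A.Nonempty) (x : Eu n) :
    0 ≤ adist φ A x :=
  le_csInf (hA.image _) (by rintro r ⟨a, _, rfl⟩; exact dualN_nonneg hφ _)

lemma adist_le (hφ : IsNorm φ) {A : Set (Eu n)} {a : Eu n} (ha : a ∈ A) (x : Eu n) :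
    adist φ A x ≤ dualN φ (x - a) :=
  csInf_le (adist_bddBelow hφ A x) ⟨a, ha, rfl⟩

lemma adist_self (hφ : IsNorm φ) {A : Set (Eu n)} {a : Eu n} (ha : a ∈ A) :
    adist φ A a = 0 :=
  le_antisymm (by simpa [dualN_zero hφ] using adist_le hφ ha a)
    (adist_nonneg hφ ⟨a, ha⟩ a)

lemma adist_le_add (hφ : IsNorm φ) {A : Set (Eu n)} (hA : A.Nonempty) (x y : Eu n) :
    adist φ A x ≤ adist φ A y + dualN φ (x - y) := by
  have : adist φ A x - dualN φ (x - y) ≤ adist φ A y := by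
    apply le_csInf (hA.image _)
    rintro r ⟨a, ha, rfl⟩
    have h1 : adist φ A x ≤ dualN φ (x - a) := adist_le hφ ha x
    have h2 : dualN φ (x - a) ≤ dualN φ (y - a) + dualN φ (x - y) := by
      have := dualN_add_le hφ (y - a) (x - y)
      rwa [show y - a + (x - y) = x - a by abel] at this
    linarith
  linarith

section Conv
variable {φh : ℕ → Eu n → ℝ}
variable (hh : ∀ h, IsNorm (φh h)) (hφ : IsNorm φ)
variable (hconv : ∀ v : Eu n, Tendsto (fun h => φh h v) atTop (nhds (φ v)))

include hh hφ hconv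

lemma exists_equiK : ∃ K > 0, (∀ v, φ v ≤ K * ‖v‖) ∧ (∀ h v, φh h v ≤ K * ‖v‖) := by
  have hM : Tendsto (fun h => normUB (φh h)) atTop (nhds (normUB φ)) := by
    apply tendsto_finset_sum
    intro i _
    exact hconv _
  have hbdd : BddAbove (Set.range fun h => normUB (φh h)) := hM.bddAbove_range
  obtain ⟨K₀, hK₀⟩ := hbdd
  refine ⟨max K₀ (normUB φ) + 1, ?_, fun v => ?_, fun h v => ?_⟩
  · have := normUB_nonneg hφ
    have : normUB φ ≤ max K₀ (normUB φ) := le_max_right _ _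
    linarith [normUB_nonneg hφ]
  · calc φ v ≤ normUB φ * ‖v‖ := hφ.le_ub v
      _ ≤ (max K₀ (normUB φ) + 1) * ‖v‖ := by
          apply mul_le_mul_of_nonneg_right _ (norm_nonneg v)
          linarith [le_max_right K₀ (normUB φ)]
  · calc φh h v ≤ normUB (φh h) * ‖v‖ := (hh h).le_ub v
      _ ≤ (max K₀ (normUB φ) + 1) * ‖v‖ := by
          apply mul_le_mul_of_nonneg_right _ (norm_nonneg v)
          have : normUB (φh h) ≤ K₀ := hK₀ ⟨h, rfl⟩
          linarith [le_max_left K₀ (normUB φ)]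

lemma unif_sphere : ∀ δ > 0, ∀ᶠ h in atTop, ∀ v : Eu n, |φh h v - φ v| ≤ δ * ‖v‖ := by
  intro δ hδ
  obtain ⟨K, hK, hubφ, hubh⟩ := exists_equiK hh hφ hconv
  set r : ℝ := δ / (3 * K) with hr_def
  have hr : 0 < r := by positivity
  -- finite subcover of the sphere
  have hsc : IsCompact (Metric.sphere (0 : Eu n) 1) := isCompact_sphere 0 1
  obtain ⟨t, ht⟩ := hsc.elim_finite_subcover (fun y : Eu n => Metric.ball y r)
    (fun y => Metric.isOpen_ball)
    (fun v hv => Set.mem_iUnion.mpr ⟨v, Metric.mem_ball_self hr⟩)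
  have hev : ∀ᶠ h in atTop, ∀ y ∈ t, |φh h y - φ y| ≤ δ / 3 := by
    rw [Filter.eventually_all_finset]
    intro y _
    have := (hconv y).eventually (Metric.closedBall_mem_nhds (φ y) (by positivity : (0:ℝ) < δ/3))
    filter_upwards [this] with h hmem
    simpa [Metric.mem_closedBall, Real.dist_eq] using hmem
  filter_upwards [hev] with h hnet v
  rcases eq_or_ne v 0 with rfl | hv
  · simp [hφ.zero, (hh h).zero]
  · have hnv : (0:ℝ) < ‖v‖ := norm_pos_iff.mpr hv
    set w : Eu n := ‖v‖⁻¹ • v with hw_def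
    have hwsph : w ∈ Metric.sphere (0 : Eu n) 1 := by
      simp [hw_def, norm_smul, abs_of_pos (inv_pos.mpr hnv), inv_mul_cancel₀ hnv.ne']
    obtain ⟨y, hyt, hyw⟩ : ∃ y ∈ t, w ∈ Metric.ball y r := by
      have := ht hwsph
      simpa using this
    have hdist : ‖w - y‖ < r := by rwa [Metric.mem_ball, dist_eq_norm] at hyw
    have h1 : |φh h w - φh h y| ≤ K * r := by
      calc |φh h w - φh h y| ≤ φh h (w - y) := (hh h).abs_sub_le w y
        _ ≤ K * ‖w - y‖ := hubh h _
        _ ≤ K * r := mul_le_mul_of_nonneg_left hdist.le hK.le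
    have h2 : |φ y - φ w| ≤ K * r := by
      calc |φ y - φ w| ≤ φ (y - w) := hφ.abs_sub_le y w
        _ ≤ K * ‖y - w‖ := hubφ _
        _ ≤ K * r := by
            rw [show y - w = -(w - y) by abel, norm_neg]
            exact mul_le_mul_of_nonneg_left hdist.le hK.le
    have h3 : |φh h y - φ y| ≤ δ / 3 := hnet y hyt
    have hKr : K * r ≤ δ / 3 := by
      rw [hr_def]
      rw [mul_div_assoc']
      rw [div_le_div_iff₀ (by positivity) (by positivity)]
      ring_nf
      nlinarith
    have hsph : |φh h w - φ w| ≤ δ := by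
      calc |φh h w - φ w| = |(φh h w - φh h y) + (φh h y - φ y) + (φ y - φ w)| := by ring_nf
        _ ≤ |φh h w - φh h y| + |φh h y - φ y| + |φ y - φ w| := by
            exact (abs_add_le _ _).trans (add_le_add_left (abs_add_le _ _) _)
        _ ≤ δ/3 + δ/3 + δ/3 := by
            exact add_le_add (add_le_add (h1.trans hKr) h3) (h2.trans hKr)
        _ = δ := by ring
    have hscale : ∀ ψ : Eu n → ℝ, IsNorm ψ → ψ v = ‖v‖ * ψ w := by
      intro ψ hψ
      have hwv : ψ w = ‖v‖⁻¹ * ψ v := by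
        rw [hw_def, hψ.2.1, abs_of_pos (inv_pos.mpr hnv)]
      rw [hwv]
      field_simp
    rw [hscale _ (hh h), hscale _ hφ, ← mul_sub, abs_mul, abs_of_pos hnv, mul_comm (δ) (‖v‖)]
    exact mul_le_mul_of_nonneg_left hsph hnv.le
end Conv

section Conv2
variable {φh : ℕ → Eu n → ℝ}
variable (hh : ∀ h, IsNorm (φh h)) (hφ : IsNorm φ)
variable (hconv : ∀ v : Eu n, Tendsto (fun h => φh h v) atTop (nhds (φ v)))

include hh hφ hconv

set_option maxHeartbeats 2000000 in
lemma dual_close : ∀ ε > 0, ∀ᶠ h in atTop, ∀ u : Eu n,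
    |dualN (φh h) u - dualN φ u| ≤ ε * ‖u‖ := by
  intro ε hε
  obtain ⟨c, hc, hlow⟩ := hφ.exists_lower
  set δ : ℝ := min (c / 2) (ε * c ^ 2 / 2) with hδ_def
  have hδ : 0 < δ := lt_min (by positivity) (by positivity)
  have hδ1 : δ ≤ c / 2 := min_le_left _ _
  have hδ2 : δ ≤ ε * c ^ 2 / 2 := min_le_right _ _
  filter_upwards [unif_sphere hh hφ hconv δ hδ] with h hcl u
  -- pointwise comparisons of the norms
  have hup : ∀ v, φh h v ≤ φ v + δ * ‖v‖ := fun v => by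
    have := abs_le.mp (hcl v); linarith [this.2]
  have hdown : ∀ v, φ v - δ * ‖v‖ ≤ φh h v := fun v => by
    have := abs_le.mp (hcl v); linarith [this.1]
  have ht1 : (0:ℝ) < (c - δ) / c := by
    apply div_pos _ hc; linarith
  have hcmp1 : ∀ v, ((c - δ) / c) * φ v ≤ φh h v := by
    intro v
    have h1 : c * ‖v‖ ≤ φ v := hlow v
    have h2 : φ v - δ * ‖v‖ ≤ φh h v := hdown v
    have h3 : 0 ≤ ‖v‖ := norm_nonneg v
    rw [div_mul_eq_mul_div, div_le_iff₀ hc]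
    nlinarith
  have ht2 : (0:ℝ) < c / (c + δ) := by positivity
  have hcmp2 : ∀ v, (c / (c + δ)) * φh h v ≤ φ v := by
    intro v
    have h1 : c * ‖v‖ ≤ φ v := hlow v
    have h2 : φh h v ≤ φ v + δ * ‖v‖ := hup v
    have h3 : 0 ≤ ‖v‖ := norm_nonneg v
    rw [div_mul_eq_mul_div, div_le_iff₀ (by linarith : (0:ℝ) < c + δ)]
    nlinarith
  have key1 := dualN_cmp hφ (hh h) ht1 hcmp1 u
  have key2 := dualN_cmp (hh h) hφ ht2 hcmp2 u
  have hd0 : 0 ≤ dualN φ u := dualN_nonneg hφ u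
  have hdh0 : 0 ≤ dualN (φh h) u := dualN_nonneg (hh h) u
  have hdub : dualN φ u ≤ ‖u‖ / c := dualN_le_div hφ hc hlow u
  set d := dualN φ u with hd_def
  set dh := dualN (φh h) u with hdh_def
  clear_value d dh
  have hA : (c - δ) * dh ≤ c * d := by
    have := key1
    rw [div_mul_eq_mul_div, div_le_iff₀ hc] at this
    linarith [this]
  have hB : c * d ≤ (c + δ) * dh := by
    have := key2
    rw [div_mul_eq_mul_div, div_le_iff₀ (by linarith : (0:ℝ) < c + δ)] at this
    linarith [this]
  have hdu : c * d ≤ ‖u‖ := by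
    rw [le_div_iff₀ hc] at hdub; linarith [hdub]
  have hu0 : 0 ≤ ‖u‖ := norm_nonneg u
  clear hcl hup hdown hcmp1 hcmp2 key1 key2 hdub hh hconv ht1 ht2
  clear_value δ
  have hc2 : (0:ℝ) < c ^ 2 := by positivity
  have hdh2d : dh ≤ 2 * d := by nlinarith [hA, hδ1, hdh0]
  rw [abs_le]
  constructor
  · -- d - dh ≤ ε ‖u‖ : from hB
    have e1 : c * (d - dh) ≤ δ * dh := by nlinarith [hB]
    have e2 : δ * dh ≤ 2 * (δ * d) := by nlinarith [hdh2d, hδ]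
    have e3 : c * (c * (d - dh)) ≤ c * (2 * (δ * d)) :=
      mul_le_mul_of_nonneg_left (e1.trans e2) hc.le
    have e4 : 2 * δ * (c * d) ≤ 2 * δ * ‖u‖ :=
      mul_le_mul_of_nonneg_left hdu (by positivity)
    have e5 : 2 * δ * ‖u‖ ≤ ε * c ^ 2 * ‖u‖ := by nlinarith [hδ2, hu0]
    have efin : c ^ 2 * (d - dh) ≤ c ^ 2 * (ε * ‖u‖) := by nlinarith [e3, e4, e5]
    have := (mul_le_mul_iff_right₀ hc2).mp efin
    linarith
  · -- dh - d ≤ ε ‖u‖ : from hA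
    rcases le_or_gt dh d with hle | hlt
    · have : 0 ≤ ε * ‖u‖ := by positivity
      linarith
    · have e1 : (c - δ) * (dh - d) ≤ δ * d := by nlinarith [hA]
      have e2 : (c / 2) * (dh - d) ≤ (c - δ) * (dh - d) :=
        mul_le_mul_of_nonneg_right (by linarith) (by linarith)
      have e3' := mul_le_mul_of_nonneg_left (e2.trans e1) (by positivity : (0:ℝ) ≤ 2 * c)
      have e3 : c ^ 2 * (dh - d) ≤ 2 * δ * (c * d) := by nlinarith [e3']
      have e4 : 2 * δ * (c * d) ≤ 2 * δ * ‖u‖ :=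
        mul_le_mul_of_nonneg_left hdu (by positivity)
      have e5 : 2 * δ * ‖u‖ ≤ ε * c ^ 2 * ‖u‖ := by nlinarith [hδ2, hu0]
      have efin : c ^ 2 * (dh - d) ≤ c ^ 2 * (ε * ‖u‖) := by nlinarith [e3, e4, e5]
      have := (mul_le_mul_iff_right₀ hc2).mp efin
      linarith
end Conv2

lemma dualN_continuous (hφ : IsNorm φ) : Continuous (dualN φ) := by
  obtain ⟨c, hc, hlow⟩ := hφ.exists_lower
  rw [Metric.continuous_iff]
  intro u ε hε
  refine ⟨ε * c, by positivity, fun w hw => ?_⟩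
  rw [Real.dist_eq]
  calc |dualN φ w - dualN φ u| ≤ dualN φ (w - u) := dualN_sub_le hφ w u
    _ ≤ ‖w - u‖ / c := dualN_le_div hφ hc hlow _
    _ < (ε * c) / c := by
        apply (div_lt_div_iff_of_pos_right hc).mpr
        rwa [dist_eq_norm] at hw
    _ = ε := by field_simp

section Conv3
variable {φh : ℕ → Eu n → ℝ}
variable (hh : ∀ h, IsNorm (φh h)) (hφ : IsNorm φ)
variable (hconv : ∀ v : Eu n, Tendsto (fun h => φh h v) atTop (nhds (φ v)))
include hh hφ hconv

lemma dualN_tendsto_seq {g : ℕ → ℕ} (hg : Tendsto g atTop atTop)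
    {uk : ℕ → Eu n} {u : Eu n} (hu : Tendsto uk atTop (𝓝 u)) :
    Tendsto (fun k => dualN (φh (g k)) (uk k)) atTop (𝓝 (dualN φ u)) := by
  rw [Metric.tendsto_nhds]
  intro ε hε
  have hcont : Tendsto (fun k => dualN φ (uk k)) atTop (𝓝 (dualN φ u)) :=
    ((dualN_continuous hφ).tendsto u).comp hu
  have h2 : ∀ᶠ k in atTop, |dualN φ (uk k) - dualN φ u| < ε / 2 := by
    have := Metric.tendsto_nhds.mp hcont (ε / 2) (by positivity)
    simpa [Real.dist_eq] using this
  have hb : ∀ᶠ k in atTop, ‖uk k‖ < ‖u‖ + 1 := by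
    have hnorm : Tendsto (fun k => ‖uk k‖) atTop (𝓝 ‖u‖) := hu.norm
    exact hnorm.eventually_lt_const (by linarith)
  have h1 := hg.eventually (dual_close hh hφ hconv (ε / (2 * (‖u‖ + 1))) (by positivity))
  filter_upwards [h1, h2, hb] with k hk1 hk2 hk3
  rw [Real.dist_eq]
  have hfirst : |dualN (φh (g k)) (uk k) - dualN φ (uk k)| ≤ ε / 2 := by
    calc |dualN (φh (g k)) (uk k) - dualN φ (uk k)| ≤ ε / (2 * (‖u‖ + 1)) * ‖uk k‖ := hk1 _
      _ ≤ ε / (2 * (‖u‖ + 1)) * (‖u‖ + 1) := by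
          apply mul_le_mul_of_nonneg_left hk3.le (by positivity)
      _ = ε / 2 := by
          have : ‖u‖ + 1 ≠ 0 := by positivity
          field_simp
  calc |dualN (φh (g k)) (uk k) - dualN φ u|
      ≤ |dualN (φh (g k)) (uk k) - dualN φ (uk k)| + |dualN φ (uk k) - dualN φ u| :=
        abs_sub_le _ _ _
    _ < ε / 2 + ε / 2 := by
        rcases lt_or_ge (|dualN (φh (g k)) (uk k) - dualN φ (uk k)|) (ε/2) with h | h
        · exact add_lt_add_of_lt_of_le h hk2.le
        · exact add_lt_add_of_le_of_lt hfirst hk2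
    _ = ε := by ring
end Conv3

end AuxLemmas

/-- if the distance functions `δ^{φ_h}_{Ω_h}` converge locally uniformly
to `f`, then `f` is the `φ`-distance to the complement of `P = {f > 0}`. -/
theorem limit_distance_function {n : ℕ} (R : ℝ) (hR : 0 < R)
    (φh : ℕ → Eu n → ℝ) (φ : Eu n → ℝ)
    (hh : ∀ h, IsNorm (φh h)) (hφ : IsNorm φ)
    (hconv : ∀ v : Eu n, Tendsto (fun h => φh h v) atTop (nhds (φ v)))
    (Ωh : ℕ → Set (Eu n)) (hopen : ∀ h, IsOpen (Ωh h))
    (hball : ∀ h, Ωh h ⊆ Metric.ball (0 : Eu n) R)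
    (hneuniv : ∀ h, Ωh h ≠ Set.univ)
    (f : Eu n → ℝ)
    (hunif : ∀ K : Set (Eu n), IsCompact K →
      TendstoUniformlyOn (fun h x => adist (φh h) (Ωh h)ᶜ x) f atTop K) :
    ∀ x : Eu n, f x = adist φ {y : Eu n | 0 < f y}ᶜ x := by
  intro x
  have hAne : ∀ h, ((Ωh h)ᶜ : Set (Eu n)).Nonempty :=
    fun h => Set.nonempty_compl.mpr (hneuniv h)
  have hptw : ∀ y : Eu n, Tendsto (fun h => adist (φh h) (Ωh h)ᶜ y) atTop (𝓝 (f y)) :=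
    fun y => (hunif {y} isCompact_singleton).tendsto_at (Set.mem_singleton y)
  -- Lipschitz property of f with respect to dualN φ
  have hflip : ∀ p q : Eu n, f p ≤ f q + dualN φ (p - q) := by
    intro p q
    have h1 : ∀ h, adist (φh h) (Ωh h)ᶜ p ≤ adist (φh h) (Ωh h)ᶜ q + dualN (φh h) (p - q) :=
      fun h => adist_le_add (hh h) (hAne h) p q
    have hd : Tendsto (fun h => dualN (φh h) (p - q)) atTop (𝓝 (dualN φ (p - q))) :=
      dualN_tendsto_seq hh hφ hconv tendsto_id tendsto_const_nhds
    exact le_of_tendsto_of_tendsto' (hptw p) ((hptw q).add hd) h1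
  -- a point outside all the Ωh
  set a₀ : Eu n := EuclideanSpace.single 0 R with ha₀_def
  have ha₀norm : ‖a₀‖ = R := by
    rw [ha₀_def, EuclideanSpace.norm_single, Real.norm_eq_abs, abs_of_pos hR]
  have ha₀ : ∀ h, a₀ ∈ (Ωh h)ᶜ := by
    intro h hmem
    have := hball h hmem
    rw [Metric.mem_ball, dist_zero_right, ha₀norm] at this
    exact lt_irrefl R this
  have hfa₀ : f a₀ = 0 := by
    have hconst : (fun h => adist (φh h) (Ωh h)ᶜ a₀) = fun _ => (0:ℝ) :=
      funext fun h => adist_self (hh h) (ha₀ h)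
    exact tendsto_nhds_unique (hptw a₀) (hconst ▸ tendsto_const_nhds)
  have ha₀P : a₀ ∈ ({y : Eu n | 0 < f y}ᶜ : Set (Eu n)) := by
    simp [hfa₀]
  -- direction ≤
  have hle : f x ≤ adist φ ({y : Eu n | 0 < f y}ᶜ) x := by
    apply le_csInf ((Set.nonempty_of_mem ha₀P).image _)
    rintro b ⟨a, haP, rfl⟩
    have hfa : ¬ 0 < f a := haP
    linarith [hflip x a, le_of_not_gt hfa]
  -- direction ≥
  obtain ⟨K, hK, hubφ, hubh⟩ := exists_equiK hh hφ hconv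
  have hch : ∀ h : ℕ, ∃ a ∈ (Ωh h)ᶜ,
      dualN (φh h) (x - a) < adist (φh h) (Ωh h)ᶜ x + 1 / ((h:ℝ) + 1) := by
    intro h
    have hne : ((fun a => dualN (φh h) (x - a)) '' (Ωh h)ᶜ).Nonempty := (hAne h).image _
    have hlt : adist (φh h) (Ωh h)ᶜ x < adist (φh h) (Ωh h)ᶜ x + 1 / ((h:ℝ) + 1) :=
      lt_add_of_pos_right _ (by positivity)
    obtain ⟨b, ⟨a, ha, rfl⟩, hb⟩ := exists_lt_of_csInf_lt hne hlt
    exact ⟨a, ha, hb⟩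
  choose a ha hlt using hch
  have hbound : ∀ h, ‖x - a h‖ ≤ K * (adist (φh h) (Ωh h)ᶜ x + 1) := by
    intro h
    have h1 : ‖x - a h‖ / K ≤ dualN (φh h) (x - a h) := ub_dualN (hh h) hK (hubh h) _
    have h2 : 1 / ((h:ℝ) + 1) ≤ 1 := by
      rw [div_le_one (by positivity)]
      simp
    rw [div_le_iff₀ hK] at h1
    have h3 : dualN (φh h) (x - a h) ≤ adist (φh h) (Ωh h)ᶜ x + 1 := by
      linarith [hlt h]
    calc ‖x - a h‖ ≤ dualN (φh h) (x - a h) * K := h1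
      _ ≤ (adist (φh h) (Ωh h)ᶜ x + 1) * K :=
          mul_le_mul_of_nonneg_right h3 hK.le
      _ = K * (adist (φh h) (Ωh h)ᶜ x + 1) := mul_comm _ _
  obtain ⟨N, hN⟩ := Filter.eventually_atTop.mp
    ((hptw x).eventually_le_const (show f x < f x + 1 by linarith))
  set ρ : ℝ := K * (f x + 2) with hρ_def
  have hmem : ∀ k : ℕ, a (N + k) ∈ Metric.closedBall x ρ := by
    intro k
    rw [Metric.mem_closedBall, dist_comm, dist_eq_norm]
    calc ‖x - a (N + k)‖ ≤ K * (adist (φh (N+k)) (Ωh (N+k))ᶜ x + 1) := hbound (N+k)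
      _ ≤ K * (f x + 2) := by
          apply mul_le_mul_of_nonneg_left _ hK.le
          linarith [hN (N + k) (Nat.le_add_right N k)]
  obtain ⟨aL, haLmem, σ, hσmono, hσtend⟩ :=
    (isCompact_closedBall x ρ).tendsto_subseq hmem
  set g : ℕ → ℕ := fun k => N + σ k with hg_def
  have hgt : Tendsto g atTop atTop :=
    tendsto_atTop_mono (fun k => Nat.le_add_left (σ k) N) hσmono.tendsto_atTop
  have hconva : Tendsto (fun k => a (g k)) atTop (𝓝 aL) := hσtend
  -- f aL = 0
  obtain ⟨c, hc, hlow⟩ := hφ.exists_lower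
  have hfc : ∀ p q : Eu n, |f p - f q| ≤ ‖p - q‖ / c := by
    intro p q
    rw [abs_sub_le_iff]
    constructor
    · have := hflip p q
      have h2 := dualN_le_div hφ hc hlow (p - q)
      linarith
    · have := hflip q p
      have h2 := dualN_le_div hφ hc hlow (q - p)
      rw [norm_sub_rev] at h2
      linarith
  have hfcont : Tendsto (fun k => f (a (g k))) atTop (𝓝 (f aL)) := by
    rw [tendsto_iff_dist_tendsto_zero]
    have hbnd : ∀ k, dist (f (a (g k))) (f aL) ≤ ‖a (g k) - aL‖ / c := by
      intro k
      rw [Real.dist_eq]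
      exact (hfc _ _)
    apply squeeze_zero (fun k => dist_nonneg) hbnd
    have hnorm0 : Tendsto (fun k => ‖a (g k) - aL‖) atTop (𝓝 0) := by
      rw [← tendsto_iff_norm_sub_tendsto_zero]
      exact hconva
    simpa using hnorm0.div_const c
  have hfainfty : f aL = 0 := by
    have hzero : ∀ k, adist (φh (g k)) (Ωh (g k))ᶜ (a (g k)) = 0 :=
      fun k => adist_self (hh (g k)) (ha (g k))
    have htends : Tendsto (fun k => adist (φh (g k)) (Ωh (g k))ᶜ (a (g k))) atTop (𝓝 (f aL)) := by
      rw [Metric.tendsto_nhds]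
      intro ε hε
      have huni := (Metric.tendstoUniformlyOn_iff.mp
        (hunif (Metric.closedBall x ρ) (isCompact_closedBall x ρ))) (ε/2) (by positivity)
      have huni' := hgt.eventually huni
      have hcl := Metric.tendsto_nhds.mp hfcont (ε/2) (by positivity)
      filter_upwards [huni', hcl] with k hk1 hk2
      have hmemk : a (g k) ∈ Metric.closedBall x ρ := hmem (σ k)
      have h1 : dist (f (a (g k))) (adist (φh (g k)) (Ωh (g k))ᶜ (a (g k))) < ε/2 :=
        hk1 _ hmemk
      calc dist (adist (φh (g k)) (Ωh (g k))ᶜ (a (g k))) (f aL)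
          ≤ dist (adist (φh (g k)) (Ωh (g k))ᶜ (a (g k))) (f (a (g k)))
            + dist (f (a (g k))) (f aL) := dist_triangle _ _ _
        _ < ε/2 + ε/2 := add_lt_add (by rwa [dist_comm] at h1) hk2
        _ = ε := by ring
    have : Tendsto (fun _ : ℕ => (0:ℝ)) atTop (𝓝 (f aL)) := by
      have heq : (fun k => adist (φh (g k)) (Ωh (g k))ᶜ (a (g k))) = fun _ => (0:ℝ) :=
        funext hzero
      rwa [heq] at htends
    exact tendsto_nhds_unique this tendsto_const_nhds
  have haLP : aL ∈ ({y : Eu n | 0 < f y}ᶜ : Set (Eu n)) := by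
    simp [hfainfty]
  -- dual φ (x - aL) ≤ f x
  have hduallim : Tendsto (fun k => dualN (φh (g k)) (x - a (g k))) atTop
      (𝓝 (dualN φ (x - aL))) :=
    dualN_tendsto_seq hh hφ hconv hgt (tendsto_const_nhds.sub hconva)
  have hrhs : Tendsto (fun k => adist (φh (g k)) (Ωh (g k))ᶜ x + 1 / ((g k : ℝ) + 1)) atTop
      (𝓝 (f x + 0)) := by
    apply Tendsto.add
    · exact (hptw x).comp hgt
    · have hbase : Tendsto (fun h : ℕ => 1 / ((h:ℝ) + 1)) atTop (𝓝 0) :=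
        tendsto_one_div_add_atTop_nhds_zero_nat
      exact hbase.comp hgt
  have hkey : dualN φ (x - aL) ≤ f x + 0 :=
    le_of_tendsto_of_tendsto' hduallim hrhs (fun k => (hlt (g k)).le)
  have hge : adist φ ({y : Eu n | 0 < f y}ᶜ) x ≤ f x := by
    have h1 : adist φ ({y : Eu n | 0 < f y}ᶜ) x ≤ dualN φ (x - aL) :=
      csInf_le (adist_bddBelow hφ _ x) ⟨aL, haLP, rfl⟩
    linarith
  linarith
end
end

section
/- Let φ be a norm on ℝ^{n+1}, r̄ > 0, W = {x : φ°(x) ≤ 1}, and let P ⊆ ℝ^{n+1} be a nonempty bounded open set. Suppose that |E^φ_{≥r̄}(P) + sW| = (|P|/r̄^{n+1})·s^{n+1} for every 0 < s < r̄, and that |E^φ_{≥r̄}(P) + int(r̄W)| = |P|, where + is the Minkowski sum, int denotes the interior, and |·| is (n+1)-dimensional Lebesgue measure. Then C := E^φ_{≥r̄}(P) is a finite set with card(C)·r̄^{n+1}·|W| = |P|; the open sets c + int(r̄W), for c ∈ C, are pairwise disjoint and contained in P; and |P \ ⋃_{c∈C}(c + int(r̄W))| = 0. -/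
open MeasureTheory Filter
open scoped RealInnerProductSpace ENNReal Pointwise Topology NNReal

noncomputable section

namespace Wulff

variable {n : ℕ} {φ : Eu n → ℝ}

lemma phi_zero (hφ : IsNorm φ) : φ 0 = 0 := by
  have := hφ.2.1 0 0
  simpa using this

lemma phi_nonneg (hφ : IsNorm φ) (v : Eu n) : 0 ≤ φ v := by
  rcases eq_or_ne v 0 with rfl | h
  · simp [phi_zero hφ]
  · exact (hφ.1 v h).le

lemma phi_continuous (hφ : IsNorm φ) : Continuous φ := by
  have hconv : ConvexOn ℝ (Set.univ) φ := by
    refine ⟨convex_univ, fun x _ y _ a b ha hb hab => ?_⟩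
    calc φ (a • x + b • y) ≤ φ (a • x) + φ (b • y) := hφ.2.2 _ _
      _ = a * φ x + b * φ y := by rw [hφ.2.1, hφ.2.1, abs_of_nonneg ha, abs_of_nonneg hb]
  have := hconv.continuousOn isOpen_univ
  rwa [continuousOn_univ] at this

/-- lower bound for φ -/
lemma phi_lower (hφ : IsNorm φ) : ∃ c : ℝ, 0 < c ∧ ∀ v : Eu n, c * ‖v‖ ≤ φ v := by
  have hsph : IsCompact (Metric.sphere (0 : Eu n) 1) := isCompact_sphere 0 1
  have hne : (Metric.sphere (0 : Eu n) 1).Nonempty := by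
    refine ⟨EuclideanSpace.single 0 1, ?_⟩
    simp [EuclideanSpace.norm_single]
  obtain ⟨v0, hv0, hmin⟩ := hsph.exists_isMinOn hne ((phi_continuous hφ).continuousOn)
  have hv0ne : v0 ≠ 0 := by
    intro h
    rw [Metric.mem_sphere, dist_zero_right, h] at hv0
    simp at hv0
  refine ⟨φ v0, hφ.1 v0 hv0ne, fun v => ?_⟩
  rcases eq_or_ne v 0 with rfl | hv
  · simp [phi_zero hφ]
  · have hnv : (0:ℝ) < ‖v‖ := norm_pos_iff.2 hv
    have hmem : ‖v‖⁻¹ • v ∈ Metric.sphere (0 : Eu n) 1 := by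
      simp [norm_smul, abs_of_pos (inv_pos.2 hnv), inv_mul_cancel₀ hnv.ne']
    have := hmin hmem
    simp only [Set.mem_setOf_eq] at this
    have h2 : φ (‖v‖⁻¹ • v) = ‖v‖⁻¹ * φ v := by
      rw [hφ.2.1, abs_of_pos (inv_pos.2 hnv)]
    rw [h2] at this
    calc φ v0 * ‖v‖ ≤ (‖v‖⁻¹ * φ v) * ‖v‖ := by
          apply mul_le_mul_of_nonneg_right this hnv.le
      _ = φ v := by field_simp

lemma phi_upper (hφ : IsNorm φ) : ∃ C : ℝ, 0 < C ∧ ∀ v : Eu n, φ v ≤ C * ‖v‖ := by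
  have hsph : IsCompact (Metric.sphere (0 : Eu n) 1) := isCompact_sphere 0 1
  have hne : (Metric.sphere (0 : Eu n) 1).Nonempty := by
    refine ⟨EuclideanSpace.single 0 1, ?_⟩
    simp [EuclideanSpace.norm_single]
  obtain ⟨v0, hv0, hmax⟩ := hsph.exists_isMaxOn hne ((phi_continuous hφ).continuousOn)
  have hv0ne : v0 ≠ 0 := by
    intro h
    rw [Metric.mem_sphere, dist_zero_right, h] at hv0
    simp at hv0
  refine ⟨φ v0, hφ.1 v0 hv0ne, fun v => ?_⟩
  rcases eq_or_ne v 0 with rfl | hv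
  · simp [phi_zero hφ]
  · have hnv : (0:ℝ) < ‖v‖ := norm_pos_iff.2 hv
    have hmem : ‖v‖⁻¹ • v ∈ Metric.sphere (0 : Eu n) 1 := by
      simp [norm_smul, abs_of_pos (inv_pos.2 hnv), inv_mul_cancel₀ hnv.ne']
    have := hmax hmem
    simp only [Set.mem_setOf_eq] at this
    have h2 : φ (‖v‖⁻¹ • v) = ‖v‖⁻¹ * φ v := by
      rw [hφ.2.1, abs_of_pos (inv_pos.2 hnv)]
    rw [h2] at this
    calc φ v = (‖v‖⁻¹ * φ v) * ‖v‖ := by field_simp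
      _ ≤ φ v0 * ‖v‖ := mul_le_mul_of_nonneg_right this hnv.le


/-! ### dual norm -/

lemma dualS_nonempty (hφ : IsNorm φ) (u : Eu n) :
    (0:ℝ) ∈ {r : ℝ | ∃ v : Eu n, φ v ≤ 1 ∧ r = ⟪u, v⟫} :=
  ⟨0, by simp [phi_zero hφ], by simp⟩

lemma dualS_bddAbove (hφ : IsNorm φ) (u : Eu n) :
    BddAbove {r : ℝ | ∃ v : Eu n, φ v ≤ 1 ∧ r = ⟪u, v⟫} := by
  obtain ⟨c, hc, hcl⟩ := phi_lower hφ
  refine ⟨‖u‖ * c⁻¹, fun r hr => ?_⟩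
  obtain ⟨v, hv, rfl⟩ := hr
  have h := (hcl v).trans hv
  have hnv : ‖v‖ ≤ c⁻¹ := by
    nlinarith [mul_le_mul_of_nonneg_left h (inv_pos.2 hc).le, inv_mul_cancel₀ hc.ne']
  calc ⟪u, v⟫ ≤ ‖u‖ * ‖v‖ := real_inner_le_norm u v
    _ ≤ ‖u‖ * c⁻¹ := mul_le_mul_of_nonneg_left hnv (norm_nonneg u)

lemma le_dualN (hφ : IsNorm φ) {u v : Eu n} (hv : φ v ≤ 1) : ⟪u, v⟫ ≤ dualN φ u :=
  le_csSup (dualS_bddAbove hφ u) ⟨v, hv, rfl⟩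

lemma dualN_le (hφ : IsNorm φ) {u : Eu n} {r : ℝ}
    (h : ∀ v : Eu n, φ v ≤ 1 → ⟪u, v⟫ ≤ r) : dualN φ u ≤ r := by
  refine csSup_le ⟨0, dualS_nonempty hφ u⟩ ?_
  rintro x ⟨v, hv, rfl⟩
  exact h v hv

lemma dualN_nonneg (hφ : IsNorm φ) (u : Eu n) : 0 ≤ dualN φ u := by
  have := le_csSup (dualS_bddAbove hφ u) (dualS_nonempty hφ u)
  exact this

lemma dualN_zero (hφ : IsNorm φ) : dualN φ (0 : Eu n) = 0 :=
  le_antisymm (dualN_le hφ fun v _ => by simp) (dualN_nonneg hφ 0)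

lemma dualN_le_norm (hφ : IsNorm φ) : ∃ C : ℝ, 0 < C ∧ ∀ u : Eu n, dualN φ u ≤ C * ‖u‖ := by
  obtain ⟨c, hc, hcl⟩ := phi_lower hφ
  refine ⟨c⁻¹, inv_pos.2 hc, fun u => ?_⟩
  refine dualN_le hφ fun v hv => ?_
  have h := (hcl v).trans hv
  have hnv : ‖v‖ ≤ c⁻¹ := by
    nlinarith [mul_le_mul_of_nonneg_left h (inv_pos.2 hc).le, inv_mul_cancel₀ hc.ne']
  calc ⟪u, v⟫ ≤ ‖u‖ * ‖v‖ := real_inner_le_norm u v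
    _ ≤ ‖u‖ * c⁻¹ := by apply mul_le_mul_of_nonneg_left hnv (norm_nonneg u)
    _ = c⁻¹ * ‖u‖ := mul_comm _ _

lemma norm_le_dualN (hφ : IsNorm φ) : ∃ c : ℝ, 0 < c ∧ ∀ u : Eu n, c * ‖u‖ ≤ dualN φ u := by
  obtain ⟨C, hC, hCu⟩ := phi_upper hφ
  refine ⟨C⁻¹, inv_pos.2 hC, fun u => ?_⟩
  rcases eq_or_ne u 0 with rfl | hu
  · simp [dualN_zero hφ]
  · have hnu : (0:ℝ) < ‖u‖ := norm_pos_iff.2 hu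
    have hφu : 0 < φ u := hφ.1 u hu
    have hv : φ ((φ u)⁻¹ • u) ≤ 1 := by
      rw [hφ.2.1, abs_of_pos (inv_pos.2 hφu), inv_mul_cancel₀ hφu.ne']
    have h1 : ⟪u, (φ u)⁻¹ • u⟫ = (φ u)⁻¹ * ‖u‖ ^ 2 := by
      rw [real_inner_smul_right, real_inner_self_eq_norm_sq]
    have h2 := le_dualN hφ (u := u) hv
    rw [h1] at h2
    refine le_trans ?_ h2
    have hφu' : φ u ≤ C * ‖u‖ := hCu u
    have h3 : (C * ‖u‖)⁻¹ ≤ (φ u)⁻¹ := by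
      apply inv_anti₀ hφu hφu'
    have h4 : C⁻¹ * ‖u‖ = (C * ‖u‖)⁻¹ * ‖u‖ ^ 2 := by
      field_simp
    rw [h4]
    exact mul_le_mul_of_nonneg_right h3 (by positivity)

lemma dualN_pos (hφ : IsNorm φ) {u : Eu n} (hu : u ≠ 0) : 0 < dualN φ u := by
  obtain ⟨c, hc, h⟩ := norm_le_dualN hφ
  calc (0:ℝ) < c * ‖u‖ := mul_pos hc (norm_pos_iff.2 hu)
    _ ≤ dualN φ u := h u

lemma dualN_smul (hφ : IsNorm φ) {t : ℝ} (ht : 0 ≤ t) (u : Eu n) :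
    dualN φ (t • u) = t * dualN φ u := by
  rcases ht.eq_or_lt with rfl | ht
  · simp [dualN_zero hφ]
  · apply le_antisymm
    · refine dualN_le hφ fun v hv => ?_
      rw [real_inner_smul_left]
      exact mul_le_mul_of_nonneg_left (le_dualN hφ hv) ht.le
    · rw [← le_div_iff₀' ht] 
      refine dualN_le hφ fun v hv => ?_
      have := le_dualN hφ (u := t • u) hv
      calc ⟪u,v⟫ = t⁻¹ * ⟪t • u, v⟫ := by
            rw [real_inner_smul_left]; field_simp
        _ ≤ t⁻¹ * dualN φ (t • u) :=
            mul_le_mul_of_nonneg_left this (inv_pos.2 ht).le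
        _ = _ := by rw [inv_mul_eq_div]
      

lemma dualN_neg (hφ : IsNorm φ) (u : Eu n) : dualN φ (-u) = dualN φ u := by
  have key : ∀ w : Eu n, dualN φ (-w) ≤ dualN φ w := by
    intro w
    refine dualN_le hφ fun v hv => ?_
    have hv' : φ (-v) ≤ 1 := by
      have : φ ((-1 : ℝ) • v) = φ v := by rw [hφ.2.1]; simp
      rw [neg_one_smul] at this
      rw [this]; exact hv
    have := le_dualN hφ (u := w) hv'
    rwa [inner_neg_right, ← inner_neg_left] at this
  have h1 := key u
  have h2 := key (-u)
  rw [neg_neg] at h2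
  exact le_antisymm h1 h2

lemma dualN_add_le (hφ : IsNorm φ) (u w : Eu n) :
    dualN φ (u + w) ≤ dualN φ u + dualN φ w := by
  refine dualN_le hφ fun v hv => ?_
  rw [inner_add_left]
  exact add_le_add (le_dualN hφ hv) (le_dualN hφ hv)

lemma dualN_sub_le (hφ : IsNorm φ) (u w : Eu n) :
    dualN φ u - dualN φ w ≤ dualN φ (u - w) := by
  have := dualN_add_le hφ (u - w) w
  rw [sub_add_cancel] at this
  linarith

lemma dualN_continuous (hφ : IsNorm φ) : Continuous (dualN φ) := by
  obtain ⟨C, hC, hCu⟩ := dualN_le_norm hφ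
  rw [Metric.continuous_iff]
  intro x ε hε
  refine ⟨ε / C, div_pos hε hC, fun y hy => ?_⟩
  rw [Real.dist_eq, abs_sub_lt_iff]
  have h1 : dualN φ (y - x) ≤ C * ‖y - x‖ := hCu _
  have h2 : dualN φ (x - y) ≤ C * ‖x - y‖ := hCu _
  have hd : ‖y - x‖ < ε / C := by rwa [dist_eq_norm] at hy
  have hd' : ‖x - y‖ < ε / C := by rwa [norm_sub_rev]
  constructor
  · have := dualN_sub_le hφ y x
    nlinarith [mul_lt_mul_of_pos_left hd hC, mul_div_cancel₀ ε hC.ne']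
  · have := dualN_sub_le hφ x y
    nlinarith [mul_lt_mul_of_pos_left hd' hC, mul_div_cancel₀ ε hC.ne']


/-! ### the Wulff shape W -/

lemma smul_W (hφ : IsNorm φ) {s : ℝ} (hs : 0 < s) :
    s • {x : Eu n | dualN φ x ≤ 1} = {x : Eu n | dualN φ x ≤ s} := by
  ext x
  rw [Set.mem_smul_set_iff_inv_smul_mem₀ hs.ne']
  simp only [Set.mem_setOf_eq]
  rw [dualN_smul hφ (inv_pos.2 hs).le, ← div_eq_inv_mul, div_le_one hs]

lemma isOpen_ball (hφ : IsNorm φ) (s : ℝ) : IsOpen {x : Eu n | dualN φ x < s} :=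
  isOpen_lt (dualN_continuous hφ) continuous_const

lemma isClosed_cball (hφ : IsNorm φ) (s : ℝ) : IsClosed {x : Eu n | dualN φ x ≤ s} :=
  isClosed_le (dualN_continuous hφ) continuous_const

lemma interior_smul_W (hφ : IsNorm φ) {s : ℝ} (hs : 0 < s) :
    interior (s • {x : Eu n | dualN φ x ≤ 1}) = {x : Eu n | dualN φ x < s} := by
  rw [smul_W hφ hs]
  apply subset_antisymm
  · intro x hx
    rcases lt_or_ge (dualN φ x) s with h | h
    · exact h
    exfalso
    have hxle := interior_subset hx
    simp only [Set.mem_setOf_eq] at hxle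
    have hxs : dualN φ x = s := le_antisymm hxle h
    have hxne : x ≠ 0 := by
      intro h0
      rw [h0, dualN_zero hφ] at hxs
      exact hs.ne hxs
    obtain ⟨δ, hδ, hball⟩ := Metric.isOpen_iff.1 isOpen_interior x hx
    set ε : ℝ := δ / (2 * ‖x‖) with hε
    have hnx : (0:ℝ) < ‖x‖ := norm_pos_iff.2 hxne
    have hεpos : 0 < ε := by positivity
    have hmem : (1 + ε) • x ∈ Metric.ball x δ := by
      rw [Metric.mem_ball, dist_eq_norm]
      have : (1 + ε) • x - x = ε • x := by
        rw [add_smul, one_smul]; abel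
      rw [this, norm_smul, Real.norm_eq_abs, abs_of_pos hεpos, hε]
      rw [div_mul_eq_mul_div, div_lt_iff₀ (by positivity)]
      nlinarith
    have h2 := interior_subset (hball hmem)
    simp only [Set.mem_setOf_eq] at h2
    rw [dualN_smul hφ (by linarith), hxs] at h2
    nlinarith
  · exact (isOpen_ball hφ s).subset_interior_iff.2 fun x hx => show dualN φ x ≤ s from le_of_lt hx

lemma ball_subset_interior (hφ : IsNorm φ) {s : ℝ} (hs : 0 < s) :
    {x : Eu n | dualN φ x < s} ⊆ interior (s • {x : Eu n | dualN φ x ≤ 1}) := by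
  rw [smul_W hφ hs]
  exact (isOpen_ball hφ s).subset_interior_iff.2 fun x hx => show dualN φ x ≤ s from le_of_lt hx

lemma convex_W (hφ : IsNorm φ) : Convex ℝ {x : Eu n | dualN φ x ≤ 1} := by
  intro x hx y hy a b ha hb hab
  simp only [Set.mem_setOf_eq] at *
  calc dualN φ (a • x + b • y) ≤ dualN φ (a • x) + dualN φ (b • y) := dualN_add_le hφ _ _
    _ = a * dualN φ x + b * dualN φ y := by rw [dualN_smul hφ ha, dualN_smul hφ hb]
    _ ≤ a * 1 + b * 1 := by
        apply add_le_add (mul_le_mul_of_nonneg_left hx ha) (mul_le_mul_of_nonneg_left hy hb)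
    _ = 1 := by rw [mul_one, mul_one, hab]

lemma bounded_W (hφ : IsNorm φ) : Bornology.IsBounded {x : Eu n | dualN φ x ≤ 1} := by
  obtain ⟨c, hc, h⟩ := norm_le_dualN hφ
  apply Bornology.IsBounded.subset (Metric.isBounded_closedBall (x := (0 : Eu n)) (r := c⁻¹))
  intro x hx
  simp only [Set.mem_setOf_eq] at hx
  rw [Metric.mem_closedBall, dist_zero_right]
  have := (h x).trans hx
  nlinarith [mul_le_mul_of_nonneg_left this (inv_pos.2 hc).le, inv_mul_cancel₀ hc.ne',
    norm_nonneg x]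

lemma volume_W_lt_top (hφ : IsNorm φ) : volume {x : Eu n | dualN φ x ≤ 1} < ⊤ :=
  (bounded_W hφ).measure_lt_top

lemma volume_W_pos (hφ : IsNorm φ) : 0 < volume {x : Eu n | dualN φ x ≤ 1} := by
  have h1 : (0 : Eu n) ∈ {x : Eu n | dualN φ x < 1} := by
    simp [dualN_zero hφ]
  have h2 := (isOpen_ball hφ (1:ℝ)).measure_pos volume ⟨0, h1⟩
  exact h2.trans_le (measure_mono fun x hx => show dualN φ x ≤ 1 from le_of_lt hx)

lemma volume_smul_W (hφ : IsNorm φ) {s : ℝ} (hs : 0 < s) :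
    volume (s • {x : Eu n | dualN φ x ≤ 1}) =
      ENNReal.ofReal (s ^ (n + 1)) * volume {x : Eu n | dualN φ x ≤ 1} := by
  rw [Measure.addHaar_smul_of_nonneg volume hs.le, finrank_euclideanSpace_fin]

lemma volume_interior_smul_W (hφ : IsNorm φ) {s : ℝ} (hs : 0 < s) :
    volume (interior (s • {x : Eu n | dualN φ x ≤ 1})) =
      ENNReal.ofReal (s ^ (n + 1)) * volume {x : Eu n | dualN φ x ≤ 1} := by
  rw [measure_interior_of_null_frontier
    (((convex_W hφ).smul s).addHaar_frontier volume), volume_smul_W hφ hs]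

/-! ### translates -/

lemma image_translate (c : Eu n) (X : Set (Eu n)) :
    (fun y => c + y) '' X = (fun y => -c + y) ⁻¹' X := by
  ext x
  simp only [Set.mem_image, Set.mem_preimage]
  constructor
  · rintro ⟨y, hy, rfl⟩; simpa using hy
  · intro h; exact ⟨-c + x, h, by abel⟩

lemma volume_translate (c : Eu n) (X : Set (Eu n)) :
    volume ((fun y => c + y) '' X) = volume X := by
  rw [image_translate]
  exact measure_preimage_add volume (-c) X

lemma measurable_translate {X : Set (Eu n)} (hX : MeasurableSet X) (c : Eu n) :
    MeasurableSet ((fun y => c + y) '' X) := by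
  rw [image_translate]
  exact hX.preimage (measurable_const.add measurable_id)

lemma add_eq_iUnion (A B : Set (Eu n)) : A + B = ⋃ a ∈ A, (fun y => a + y) '' B := by
  ext x
  simp only [Set.mem_add, Set.mem_iUnion, Set.mem_image]
  constructor
  · rintro ⟨a, ha, b, hb, rfl⟩; exact ⟨a, ha, b, hb, rfl⟩
  · rintro ⟨a, ha, b, hb, rfl⟩; exact ⟨a, ha, b, hb, rfl⟩

/-! ### adist -/

lemma adist_le (hφ : IsNorm φ) {A : Set (Eu n)} {a : Eu n} (ha : a ∈ A) (x : Eu n) :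
    adist φ A x ≤ dualN φ (x - a) := by
  have hbdd : BddBelow ((fun a => dualN φ (x - a)) '' A) := by
    refine ⟨0, ?_⟩
    rintro r ⟨b, _, rfl⟩
    exact dualN_nonneg hφ _
  exact csInf_le hbdd ⟨a, ha, rfl⟩


/-! ### separation and counting -/

lemma exists_sep (hφ : IsNorm φ) {rbar : ℝ} (hrbar : 0 < rbar) (F : Finset (Eu n)) :
    ∃ s : ℝ, 0 < s ∧ s < rbar ∧
      ∀ c ∈ F, ∀ d ∈ F, c ≠ d → 2 * s < dualN φ (c - d) := by
  classical
  rcases F.offDiag.eq_empty_or_nonempty with he | hne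
  · refine ⟨rbar / 2, by linarith, by linarith, fun c hc d hd hcd => ?_⟩
    exfalso
    have : (c, d) ∈ F.offDiag := Finset.mem_offDiag.2 ⟨hc, hd, hcd⟩
    rw [he] at this
    exact absurd this (Finset.notMem_empty _)
  · obtain ⟨b, hb, hmin⟩ :=
      F.offDiag.exists_min_image (fun p => dualN φ (p.1 - p.2)) hne
    set m : ℝ := dualN φ (b.1 - b.2) with hm
    have hmpos : 0 < m := by
      obtain ⟨-, -, hne'⟩ := Finset.mem_offDiag.1 hb
      exact dualN_pos hφ (sub_ne_zero.2 hne')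
    refine ⟨min (rbar / 2) (m / 4), by positivity, ?_, fun c hc d hd hcd => ?_⟩
    · exact lt_of_le_of_lt (min_le_left _ _) (by linarith)
    · have h1 : m ≤ dualN φ (c - d) :=
        hmin (c, d) (Finset.mem_offDiag.2 ⟨hc, hd, hcd⟩)
      have h2 : min (rbar / 2) (m / 4) ≤ m / 4 := min_le_right _ _
      linarith

lemma mem_P_of_mem_C (hφ : IsNorm φ) {rbar : ℝ} (hrbar : 0 < rbar) {P : Set (Eu n)}
    {c y : Eu n} (hc : rbar ≤ adist φ Pᶜ c) (hy : dualN φ y < rbar) : c + y ∈ P := by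
  by_contra h
  have hmem : c + y ∈ Pᶜ := h
  have := adist_le hφ hmem c
  have hsub : c - (c + y) = -y := by abel
  rw [hsub, dualN_neg hφ] at this
  linarith [hc.trans this]

lemma volume_P_pos {P : Set (Eu n)} (hPne : P.Nonempty) (hPopen : IsOpen P) :
    0 < volume P := hPopen.measure_pos volume hPne

/-- The translated small Wulff balls centred at points of `C` are measurable with
known volume, pairwise disjoint when the centres are `2s`-separated, and their union is
inside `C + s • W`.  Key counting estimate. -/
lemma counting (hφ : IsNorm φ) {rbar : ℝ} (hrbar : 0 < rbar) {P : Set (Eu n)}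
    (hPbd : Bornology.IsBounded P)
    (hvol1 : ∀ s : ℝ, 0 < s → s < rbar →
      (volume ({x : Eu n | rbar ≤ adist φ Pᶜ x} + s • {x : Eu n | dualN φ x ≤ 1})).toReal =
        (volume P).toReal / rbar ^ (n + 1) * s ^ (n + 1))
    (F : Finset (Eu n)) (hF : ∀ c ∈ F, rbar ≤ adist φ Pᶜ c) :
    (F.card : ℝ) * (volume {x : Eu n | dualN φ x ≤ 1}).toReal ≤
      (volume P).toReal / rbar ^ (n + 1) := by
  obtain ⟨s, hs0, hsr, hsep⟩ := exists_sep hφ hrbar F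
  set W : Set (Eu n) := {x : Eu n | dualN φ x ≤ 1} with hW
  set C : Set (Eu n) := {x : Eu n | rbar ≤ adist φ Pᶜ x} with hC
  set A : Eu n → Set (Eu n) := fun c => (fun y => c + y) '' {x : Eu n | dualN φ x ≤ s}
    with hA
  have hAmeas : ∀ c : Eu n, MeasurableSet (A c) := fun c =>
    measurable_translate (isClosed_cball hφ s).measurableSet c
  have hAvol : ∀ c : Eu n, volume (A c) = ENNReal.ofReal (s ^ (n + 1)) * volume W := by
    intro c
    rw [hA]
    simp only
    rw [volume_translate, ← smul_W hφ hs0, volume_smul_W hφ hs0]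
  have hdisj : (↑F : Set (Eu n)).PairwiseDisjoint A := by
    intro c hc d hd hcd
    simp only [Function.onFun]
    rw [Set.disjoint_left]
    rintro x ⟨y1, hy1, hx1⟩ ⟨y2, hy2, hx2⟩
    simp only [Set.mem_setOf_eq] at hy1 hy2
    have h12 : c + y1 = d + y2 := hx1.trans hx2.symm
    have e : c - d = y2 - y1 := by
      rw [sub_eq_sub_iff_add_eq_add]
      exact h12.trans (add_comm d y2)
    have hbig : dualN φ (c - d) ≤ 2 * s := by
      calc dualN φ (c - d) = dualN φ (y2 - y1) := by rw [e]
        _ ≤ dualN φ y2 + dualN φ (-y1) := by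
            rw [sub_eq_add_neg]; exact dualN_add_le hφ _ _
        _ = dualN φ y2 + dualN φ y1 := by rw [dualN_neg hφ]
        _ ≤ 2 * s := by linarith
    exact absurd (hsep c hc d hd hcd) (not_lt.2 hbig)
  have hsum : ∑ c ∈ F, volume (A c) = volume (⋃ c ∈ F, A c) :=
    (measure_biUnion_finset hdisj fun c _ => hAmeas c).symm
  have hUsub : (⋃ c ∈ F, A c) ⊆ C + s • W := by
    refine Set.iUnion₂_subset fun c hc => ?_
    rintro x ⟨y, hy, rfl⟩
    exact Set.add_mem_add (hF c hc) (by rw [smul_W hφ hs0]; exact hy)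
  have hle : ∑ c ∈ F, volume (A c) ≤ volume (C + s • W) := by
    rw [hsum]; exact measure_mono hUsub
  have hCP : C ⊆ P := by
    intro c hc
    have := mem_P_of_mem_C hφ hrbar hc (y := 0) (by rw [dualN_zero hφ]; exact hrbar)
    simpa using this
  have hbd : Bornology.IsBounded (C + s • W) := by
    apply Bornology.IsBounded.subset (hPbd.add ((bounded_W hφ).smul₀ s))
    exact Set.add_subset_add hCP subset_rfl
  have hVfin : volume (C + s • W) ≠ ⊤ := hbd.measure_lt_top.ne
  have htr := ENNReal.toReal_mono hVfin hle
  rw [hvol1 s hs0 hsr] at htr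
  have hsumval : ∑ c ∈ F, volume (A c) =
      (F.card : ℝ≥0∞) * (ENNReal.ofReal (s ^ (n + 1)) * volume W) := by
    rw [Finset.sum_congr rfl fun c _ => hAvol c, Finset.sum_const, nsmul_eq_mul]
  rw [hsumval, ENNReal.toReal_mul, ENNReal.toReal_mul, ENNReal.toReal_natCast,
    ENNReal.toReal_ofReal (by positivity)] at htr
  have hspow : (0:ℝ) < s ^ (n + 1) := pow_pos hs0 _
  nlinarith [htr]


/-- If the fine volume identity holds with equality of the count, then any two small
Wulff balls centred at distinct points of `C` overlap in measure zero. -/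
lemma pair_null (hφ : IsNorm φ) {rbar : ℝ} (hrbar : 0 < rbar) {P : Set (Eu n)}
    (hPbd : Bornology.IsBounded P)
    (hvol1 : ∀ s : ℝ, 0 < s → s < rbar →
      (volume ({x : Eu n | rbar ≤ adist φ Pᶜ x} + s • {x : Eu n | dualN φ x ≤ 1})).toReal =
        (volume P).toReal / rbar ^ (n + 1) * s ^ (n + 1))
    (hfin : {x : Eu n | rbar ≤ adist φ Pᶜ x}.Finite)
    (hcard : ({x : Eu n | rbar ≤ adist φ Pᶜ x}.ncard : ℝ) *
      (volume {x : Eu n | dualN φ x ≤ 1}).toReal = (volume P).toReal / rbar ^ (n + 1))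
    {s : ℝ} (hs0 : 0 < s) (hsr : s < rbar)
    {c d : Eu n} (hc : rbar ≤ adist φ Pᶜ c) (hd : rbar ≤ adist φ Pᶜ d) (hcd : c ≠ d) :
    volume (((fun y => c + y) '' {x : Eu n | dualN φ x ≤ s}) ∩
      ((fun y => d + y) '' {x : Eu n | dualN φ x ≤ s})) = 0 := by
  classical
  set W : Set (Eu n) := {x : Eu n | dualN φ x ≤ 1} with hW
  set C : Set (Eu n) := {x : Eu n | rbar ≤ adist φ Pᶜ x} with hC
  set A : Eu n → Set (Eu n) := fun c => (fun y => c + y) '' {x : Eu n | dualN φ x ≤ s}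
    with hA
  set F : Finset (Eu n) := hfin.toFinset with hF
  have hmemF : ∀ {e : Eu n}, e ∈ F ↔ e ∈ C := fun {e} => hfin.mem_toFinset
  have hcF : c ∈ F := hmemF.2 hc
  have hdF : d ∈ F := hmemF.2 hd
  have hAmeas : ∀ e : Eu n, MeasurableSet (A e) := fun e =>
    measurable_translate (isClosed_cball hφ s).measurableSet e
  have hAvol : ∀ e : Eu n, volume (A e) = ENNReal.ofReal (s ^ (n + 1)) * volume W := by
    intro e
    rw [hA]
    simp only
    rw [volume_translate, ← smul_W hφ hs0, volume_smul_W hφ hs0]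
  have hAfin : ∀ e : Eu n, volume (A e) ≠ ⊤ := by
    intro e
    rw [hAvol e]
    exact (ENNReal.mul_lt_top ENNReal.ofReal_lt_top (volume_W_lt_top hφ)).ne
  -- the union over F is exactly C + s • W
  have hUeq : (⋃ e ∈ F, A e) = C + s • W := by
    rw [add_eq_iUnion, smul_W hφ hs0]
    ext x
    simp only [Set.mem_iUnion]
    constructor
    · rintro ⟨e, he, hx⟩; exact ⟨e, hmemF.1 he, hx⟩
    · rintro ⟨e, he, hx⟩; exact ⟨e, hmemF.2 he, hx⟩
  -- total volume identities
  have hCP : C ⊆ P := by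
    intro e he
    have := mem_P_of_mem_C hφ hrbar (hC ▸ he) (y := 0)
      (by rw [dualN_zero hφ]; exact hrbar)
    simpa using this
  have hbd : Bornology.IsBounded (C + s • W) := by
    apply Bornology.IsBounded.subset (hPbd.add ((bounded_W hφ).smul₀ s))
    exact Set.add_subset_add hCP subset_rfl
  have hVfin : volume (C + s • W) ≠ ⊤ := hbd.measure_lt_top.ne
  have hVval : volume (C + s • W) =
      ENNReal.ofReal ((volume P).toReal / rbar ^ (n + 1) * s ^ (n + 1)) := by
    rw [← hvol1 s hs0 hsr, ENNReal.ofReal_toReal hVfin]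
  have hcardF : (F.card : ℝ) = (C.ncard : ℝ) := by
    rw [hF, Set.ncard_eq_toFinset_card C hfin]
  have hsumval : ∑ e ∈ F, volume (A e) =
      ENNReal.ofReal ((volume P).toReal / rbar ^ (n + 1) * s ^ (n + 1)) := by
    rw [Finset.sum_congr rfl fun e _ => hAvol e, Finset.sum_const, nsmul_eq_mul]
    rw [← ENNReal.ofReal_toReal (volume_W_lt_top hφ).ne]
    rw [← ENNReal.ofReal_natCast, ← ENNReal.ofReal_mul (by positivity),
      ← ENNReal.ofReal_mul (by positivity)]
    congr 1
    rw [← hcard, ← hcardF]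
    ring
  have hsum_eq : ∑ e ∈ F, volume (A e) = volume (⋃ e ∈ F, A e) := by
    rw [hUeq, hVval, hsumval]
  -- split the sum
  have hdF' : d ∈ F.erase c := Finset.mem_erase.2 ⟨Ne.symm hcd, hdF⟩
  set T : ℝ≥0∞ := ∑ e ∈ (F.erase c).erase d, volume (A e) with hT
  have hsplit : ∑ e ∈ F, volume (A e) = volume (A c) + (volume (A d) + T) := by
    rw [← Finset.add_sum_erase F _ hcF, ← Finset.add_sum_erase (F.erase c) _ hdF']
  have hTfin : T ≠ ⊤ := by
    rw [hT]
    exact (ENNReal.sum_lt_top.2 fun e _ => (hAfin e).lt_top).ne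
  have hABfin : volume (A c ∪ A d) ≠ ⊤ := by
    refine ((measure_union_le _ _).trans_lt ?_).ne
    exact ENNReal.add_lt_top.2 ⟨(hAfin c).lt_top, (hAfin d).lt_top⟩
  -- covering bound
  have hcover : (⋃ e ∈ F, A e) ⊆ (A c ∪ A d) ∪ ⋃ e ∈ (F.erase c).erase d, A e := by
    refine Set.iUnion₂_subset fun e he => ?_
    by_cases hec : e = c
    · exact fun x hx => Or.inl (Or.inl (hec ▸ hx))
    by_cases hed : e = d
    · exact fun x hx => Or.inl (Or.inr (hed ▸ hx))
    · intro x hx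
      exact Or.inr (Set.mem_biUnion (Finset.mem_erase.2 ⟨hed, Finset.mem_erase.2 ⟨hec, he⟩⟩) hx)
  have hub : volume (⋃ e ∈ F, A e) ≤ volume (A c ∪ A d) + T := by
    refine (measure_mono hcover).trans ((measure_union_le _ _).trans ?_)
    gcongr
    exact measure_biUnion_finset_le _ _
  have hkey : volume (A c) + volume (A d) + T ≤ volume (A c ∪ A d) + T := by
    calc volume (A c) + volume (A d) + T = ∑ e ∈ F, volume (A e) := by
          rw [hsplit]; ring
      _ = volume (⋃ e ∈ F, A e) := hsum_eq
      _ ≤ volume (A c ∪ A d) + T := hub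
  have hkey2 : volume (A c) + volume (A d) ≤ volume (A c ∪ A d) :=
    ENNReal.le_of_add_le_add_right hTfin hkey
  have hinter := measure_union_add_inter₀ (μ := volume) (A c) ((hAmeas d).nullMeasurableSet)
  -- μ(A c ∪ A d) + μ(A c ∩ A d) ≤ μ(A c ∪ A d)
  have hfinal : volume (A c ∪ A d) + volume (A c ∩ A d) ≤ volume (A c ∪ A d) + 0 := by
    rw [hinter, add_zero]
    exact hkey2
  have := ENNReal.le_of_add_le_add_left hABfin hfinal
  exact le_antisymm this zero_le


theorem wulff_rigidity_aux {n : ℕ} (φ : Eu n → ℝ) (hφ : IsNorm φ)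
    (rbar : ℝ) (hrbar : 0 < rbar)
    (P : Set (Eu n)) (hPne : P.Nonempty) (hPbd : Bornology.IsBounded P) (hPopen : IsOpen P)
    (hvol1 : ∀ s : ℝ, 0 < s → s < rbar →
      (volume ({x : Eu n | rbar ≤ adist φ Pᶜ x} + s • {x : Eu n | dualN φ x ≤ 1})).toReal =
        (volume P).toReal / rbar ^ (n + 1) * s ^ (n + 1))
    (hvol2 : (volume ({x : Eu n | rbar ≤ adist φ Pᶜ x} +
        interior (rbar • {x : Eu n | dualN φ x ≤ 1}))).toReal = (volume P).toReal) :
    {x : Eu n | rbar ≤ adist φ Pᶜ x}.Finite ∧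
      (({x : Eu n | rbar ≤ adist φ Pᶜ x}.ncard : ℝ) * rbar ^ (n + 1) *
        (volume {x : Eu n | dualN φ x ≤ 1}).toReal = (volume P).toReal) ∧
      (∀ c ∈ {x : Eu n | rbar ≤ adist φ Pᶜ x},
        (fun y => c + y) '' interior (rbar • {x : Eu n | dualN φ x ≤ 1}) ⊆ P) ∧
      ({x : Eu n | rbar ≤ adist φ Pᶜ x}.Pairwise fun c d =>
        Disjoint ((fun y => c + y) '' interior (rbar • {x : Eu n | dualN φ x ≤ 1}))
          ((fun y => d + y) '' interior (rbar • {x : Eu n | dualN φ x ≤ 1}))) ∧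
      volume (P \ ⋃ c ∈ {x : Eu n | rbar ≤ adist φ Pᶜ x},
        (fun y => c + y) '' interior (rbar • {x : Eu n | dualN φ x ≤ 1})) = 0 := by
  classical
  set W : Set (Eu n) := {x : Eu n | dualN φ x ≤ 1} with hW
  set C : Set (Eu n) := {x : Eu n | rbar ≤ adist φ Pᶜ x} with hC
  have hVW0 : 0 < (volume W).toReal :=
    ENNReal.toReal_pos (volume_W_pos hφ).ne' (volume_W_lt_top hφ).ne
  have hVPfin : volume P ≠ ⊤ := hPbd.measure_lt_top.ne
  have hVP0 : 0 < (volume P).toReal :=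
    ENNReal.toReal_pos (volume_P_pos hPne hPopen).ne' hVPfin
  have hrpow : (0:ℝ) < rbar ^ (n + 1) := pow_pos hrbar _
  -- finiteness
  have hfin : C.Finite := by
    by_contra hinf
    have hinf : C.Infinite := hinf
    obtain ⟨k, hk⟩ :=
      exists_nat_gt ((volume P).toReal / rbar ^ (n + 1) / (volume W).toReal)
    obtain ⟨t, htC, htfin, htcard⟩ := hinf.exists_subset_ncard_eq k
    have hcount := counting hφ hrbar hPbd hvol1 htfin.toFinset
      (fun e he => htC (htfin.mem_toFinset.1 he))
    rw [← Set.ncard_eq_toFinset_card t htfin, htcard] at hcount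
    have h2 := (div_lt_iff₀ hVW0).1 hk
    linarith
  have hcount := counting hφ hrbar hPbd hvol1 hfin.toFinset
    (fun e he => hfin.mem_toFinset.1 he)
  rw [← Set.ncard_eq_toFinset_card C hfin] at hcount
  -- basic geometry
  have hball : interior (rbar • W) = {x : Eu n | dualN φ x < rbar} :=
    interior_smul_W hφ hrbar
  have hsubP : ∀ c ∈ C, (fun y => c + y) '' interior (rbar • W) ⊆ P := by
    intro c hc
    rintro x ⟨y, hy, rfl⟩
    rw [hball] at hy
    exact mem_P_of_mem_C hφ hrbar hc hy
  have hUeq : C + interior (rbar • W) =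
      ⋃ c ∈ C, (fun y => c + y) '' interior (rbar • W) := add_eq_iUnion _ _
  have hUeq' : (⋃ c ∈ C, (fun y => c + y) '' interior (rbar • W)) =
      ⋃ c ∈ hfin.toFinset, (fun y => c + y) '' interior (rbar • W) := by
    ext x
    simp only [Set.mem_iUnion, hfin.mem_toFinset]
  have hintvol : volume (interior (rbar • W)) =
      ENNReal.ofReal (rbar ^ (n + 1)) * volume W := volume_interior_smul_W hφ hrbar
  -- the upper bound on |P|
  have hup : (volume P).toReal ≤ (C.ncard : ℝ) * (rbar ^ (n + 1) * (volume W).toReal) := by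
    rw [← hvol2]
    have h1 : volume (C + interior (rbar • W)) ≤
        (hfin.toFinset.card : ℝ≥0∞) * (ENNReal.ofReal (rbar ^ (n + 1)) * volume W) := by
      rw [hUeq, hUeq']
      refine (measure_biUnion_finset_le _ _).trans ?_
      rw [Finset.sum_congr rfl fun e _ => by rw [volume_translate, hintvol],
        Finset.sum_const, nsmul_eq_mul]
    have hRfin : ((hfin.toFinset.card : ℝ≥0∞) *
        (ENNReal.ofReal (rbar ^ (n + 1)) * volume W)) ≠ ⊤ := by
      refine ENNReal.mul_ne_top (by simp) (ENNReal.mul_ne_top ?_ (volume_W_lt_top hφ).ne)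
      exact ENNReal.ofReal_ne_top
    have h2 := ENNReal.toReal_mono hRfin h1
    rw [ENNReal.toReal_mul, ENNReal.toReal_mul, ENNReal.toReal_natCast,
      ENNReal.toReal_ofReal (by positivity)] at h2
    rw [Set.ncard_eq_toFinset_card C hfin]
    exact h2
  -- the counting equality
  have hcardK : (C.ncard : ℝ) * (volume W).toReal = (volume P).toReal / rbar ^ (n + 1) := by
    apply le_antisymm hcount
    rw [div_le_iff₀ hrpow]
    nlinarith [hup]
  have hcard : (C.ncard : ℝ) * rbar ^ (n + 1) * (volume W).toReal = (volume P).toReal := by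
    have := congrArg (· * rbar ^ (n + 1)) hcardK
    rw [div_mul_cancel₀ _ hrpow.ne'] at this
    nlinarith [this]
  refine ⟨hfin, hcard, hsubP, ?_, ?_⟩
  · -- pairwise disjoint
    intro c hc d hd hcd
    by_contra hnd
    obtain ⟨x, hxc, hxd⟩ := Set.not_disjoint_iff.1 hnd
    obtain ⟨y1, hy1, hx1⟩ := hxc
    obtain ⟨y2, hy2, hx2⟩ := hxd
    rw [hball] at hy1 hy2
    simp only [Set.mem_setOf_eq] at hy1 hy2
    set t : ℝ := max (dualN φ y1) (dualN φ y2) with ht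
    have ht0 : 0 ≤ t := le_max_of_le_left (dualN_nonneg hφ _)
    have htr : t < rbar := max_lt hy1 hy2
    set s : ℝ := (t + rbar) / 2 with hs
    have hs0 : 0 < s := by rw [hs]; linarith
    have hsr : s < rbar := by rw [hs]; linarith
    have hnull := pair_null hφ hrbar hPbd hvol1 hfin hcardK hs0 hsr hc hd hcd
    have hUopen : IsOpen (((fun y => c + y) '' {x : Eu n | dualN φ x < s}) ∩
        ((fun y => d + y) '' {x : Eu n | dualN φ x < s})) :=
      ((isOpenMap_add_left c) _ (isOpen_ball hφ s)).inter
        ((isOpenMap_add_left d) _ (isOpen_ball hφ s))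
    have hxmem : x ∈ ((fun y => c + y) '' {x : Eu n | dualN φ x < s}) ∩
        ((fun y => d + y) '' {x : Eu n | dualN φ x < s}) := by
      constructor
      · exact ⟨y1, show dualN φ y1 < s from by
          have := le_max_left (dualN φ y1) (dualN φ y2); rw [hs]; linarith, hx1⟩
      · exact ⟨y2, show dualN φ y2 < s from by
          have := le_max_right (dualN φ y1) (dualN φ y2); rw [hs]; linarith, hx2⟩
    have hpos := hUopen.measure_pos volume ⟨x, hxmem⟩
    have hsub : (((fun y => c + y) '' {x : Eu n | dualN φ x < s}) ∩
        ((fun y => d + y) '' {x : Eu n | dualN φ x < s})) ⊆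
        (((fun y => c + y) '' {x : Eu n | dualN φ x ≤ s}) ∩
        ((fun y => d + y) '' {x : Eu n | dualN φ x ≤ s})) := by
      apply Set.inter_subset_inter <;>
        exact Set.image_mono fun z hz => show dualN φ z ≤ s from le_of_lt hz
    exact absurd (measure_mono_null hsub hnull) hpos.ne'
  · -- the remainder is null
    set U : Set (Eu n) := ⋃ c ∈ C, (fun y => c + y) '' interior (rbar • W) with hU
    have hU_sub_P : U ⊆ P := Set.iUnion₂_subset hsubP
    have hUopen : IsOpen U :=
      isOpen_biUnion fun c _ => (isOpenMap_add_left c) _ isOpen_interior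
    have hUfin : volume U ≠ ⊤ := ((measure_mono hU_sub_P).trans_lt hVPfin.lt_top).ne
    have hUvol : volume U = volume P := by
      have h1 : (volume U).toReal = (volume P).toReal := by
        rw [← hUeq, hvol2]
      exact (ENNReal.toReal_eq_toReal_iff' hUfin hVPfin).1 h1
    rw [measure_diff hU_sub_P hUopen.measurableSet.nullMeasurableSet hUfin, hUvol,
      tsub_self]

end Wulff

/-- rigidity. If `|E^φ_{≥r̄}(P) + sW| = (|P|/r̄^{n+1})·s^{n+1}` for `0 < s < r̄`
and `|E^φ_{≥r̄}(P) + int(r̄W)| = |P|`, then `C = E^φ_{≥r̄}(P)` is finite with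
`card(C)·r̄^{n+1}·|W| = |P|`, the translated open Wulff shapes `c + int(r̄W)`, `c ∈ C`,
are pairwise disjoint and contained in `P`, and they fill `P` up to measure zero. -/
theorem wulff_rigidity {n : ℕ} (φ : Eu n → ℝ) (hφ : IsNorm φ)
    (rbar : ℝ) (hrbar : 0 < rbar)
    (P : Set (Eu n)) (hPne : P.Nonempty) (hPbd : Bornology.IsBounded P) (hPopen : IsOpen P)
    (hvol1 : ∀ s : ℝ, 0 < s → s < rbar →
      (volume ({x : Eu n | rbar ≤ adist φ Pᶜ x} + s • {x : Eu n | dualN φ x ≤ 1})).toReal =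
        (volume P).toReal / rbar ^ (n + 1) * s ^ (n + 1))
    (hvol2 : (volume ({x : Eu n | rbar ≤ adist φ Pᶜ x} +
        interior (rbar • {x : Eu n | dualN φ x ≤ 1}))).toReal = (volume P).toReal) :
    {x : Eu n | rbar ≤ adist φ Pᶜ x}.Finite ∧
      (({x : Eu n | rbar ≤ adist φ Pᶜ x}.ncard : ℝ) * rbar ^ (n + 1) *
        (volume {x : Eu n | dualN φ x ≤ 1}).toReal = (volume P).toReal) ∧
      (∀ c ∈ {x : Eu n | rbar ≤ adist φ Pᶜ x},
        (fun y => c + y) '' interior (rbar • {x : Eu n | dualN φ x ≤ 1}) ⊆ P) ∧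
      ({x : Eu n | rbar ≤ adist φ Pᶜ x}.Pairwise fun c d =>
        Disjoint ((fun y => c + y) '' interior (rbar • {x : Eu n | dualN φ x ≤ 1}))
          ((fun y => d + y) '' interior (rbar • {x : Eu n | dualN φ x ≤ 1}))) ∧
      volume (P \ ⋃ c ∈ {x : Eu n | rbar ≤ adist φ Pᶜ x},
        (fun y => c + y) '' interior (rbar • {x : Eu n | dualN φ x ≤ 1})) = 0 := by
  exact Wulff.wulff_rigidity_aux φ hφ rbar hrbar P hPne hPbd hPopen hvol1 hvol2
end
end
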